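/- arXiv:1512.06205 — 5 statements merged into one kernel-verified Lean document; each statement's English description precedes it below -/
import Mathlib

section
/- Let V be a finite set partitioned into disjoint subsets V_1, ..., V_n, each of odd size. Let G be a graph on vertex set V such that each V_i is an independent set in G and, for every pair i ≠ j, the bipartite subgraph induced on V_i ∪ V_j has all degrees even. Then the number of subsets U ⊆ V with |U ∩ V_i| = 1 for all i such that the subgraph of G induced on U has all degrees even is odd. -/
namespace Stmt0Aux

open Finset

lemma natCast_even {m : ℕ} (h : Even m) : (m : ZMod 2) = 0 := by
  obtain ⟨k, rfl⟩ := h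
  push_cast
  have h2 : (2 : ZMod 2) = 0 := by decide
  ring_nf
  rw [show ((k : ZMod 2) * 2) = (k : ZMod 2) * 2 from rfl, h2, mul_zero]

lemma natCast_odd {m : ℕ} (h : Odd m) : (m : ZMod 2) = 1 := by
  obtain ⟨k, rfl⟩ := h
  push_cast
  have h2 : (2 : ZMod 2) = 0 := by decide
  rw [h2, zero_mul, zero_add]

section FPP

variable {n : ℕ}

def pre (σ : Fin n → Option (Fin n)) (i : Fin n) : Finset (Fin n) :=
  univ.filter fun k => σ k = some i

def IsFPP (σ : Fin n → Option (Fin n)) : Prop :=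
  (∀ i, σ i ≠ some i) ∧ ∀ i, σ i ≠ none → (pre σ i).Nonempty

instance (σ : Fin n → Option (Fin n)) : Decidable (IsFPP σ) := by
  unfold IsFPP pre; infer_instance

def invF (σ : Fin n → Option (Fin n)) (i : Fin n) : Option (Fin n) :=
  if h : (pre σ i).Nonempty then some ((pre σ i).min' h) else none

lemma sum_card_pre (σ : Fin n → Option (Fin n)) :
    ∑ i, (pre σ i).card = (univ.filter fun k => σ k ≠ none).card := by
  unfold pre
  simp_rw [card_filter]
  rw [Finset.sum_comm]
  refine Finset.sum_congr rfl fun k _ => ?_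
  cases h : σ k with
  | none => simp [h]
  | some j => simp [h, eq_comm]

lemma card_pre_fpp {σ : Fin n → Option (Fin n)} (h : IsFPP σ) (i : Fin n) :
    (pre σ i).card = if σ i = none then 0 else 1 := by
  classical
  set S : Finset (Fin n) := univ.filter fun k => σ k ≠ none with hS
  have h1 : ∀ j ∈ S, 1 ≤ (pre σ j).card := by
    intro j hj
    exact Finset.card_pos.mpr (h.2 j (by simpa [hS] using hj))
  have htot : ∑ j, (pre σ j).card = S.card := sum_card_pre σ
  have hsplit : ∑ j ∈ S, (pre σ j).card + ∑ j ∈ Sᶜ, (pre σ j).card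
      = ∑ j, (pre σ j).card := by
    rw [Finset.sum_add_sum_compl]
  have hge : S.card ≤ ∑ j ∈ S, (pre σ j).card := by
    calc S.card = ∑ j ∈ S, 1 := by simp
    _ ≤ ∑ j ∈ S, (pre σ j).card := Finset.sum_le_sum h1
  have hcompl : ∑ j ∈ Sᶜ, (pre σ j).card = 0 := by omega
  have hSsum : ∑ j ∈ S, (pre σ j).card = S.card := by omega
  have hone : ∀ j ∈ S, (pre σ j).card = 1 := by
    intro j hj
    have := (Finset.sum_eq_sum_iff_of_le h1).mp (by simpa using hSsum.symm) j hj
    omega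
  by_cases hi : σ i = none
  · rw [if_pos hi]
    have hiS : i ∈ Sᶜ := by simp [hS, hi]
    exact (Finset.sum_eq_zero_iff.mp hcompl) i hiS
  · rw [if_neg hi]
    exact hone i (by simp [hS, hi])

lemma invF_some_iff {σ : Fin n → Option (Fin n)} (h : IsFPP σ) {i j : Fin n} :
    invF σ i = some j ↔ σ j = some i := by
  constructor
  · intro hj
    unfold invF at hj
    by_cases hne : (pre σ i).Nonempty
    · rw [dif_pos hne] at hj
      have := Finset.min'_mem (pre σ i) hne
      rw [Option.some_inj] at hj
      rw [← hj]
      simpa [pre] using this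
    · rw [dif_neg hne] at hj
      exact absurd hj (by simp)
  · intro hj
    have hmem : j ∈ pre σ i := by simp [pre, hj]
    have hne : (pre σ i).Nonempty := ⟨j, hmem⟩
    have hcard : (pre σ i).card = 1 := by
      have hc := card_pre_fpp h i
      by_cases h0 : σ i = none
      · rw [if_pos h0] at hc
        exact absurd hc (by simpa using Finset.card_pos.mpr hne |>.ne')
      · rwa [if_neg h0] at hc
    unfold invF
    rw [dif_pos hne, Option.some_inj]
    exact Finset.card_le_one.mp hcard.le _ (Finset.min'_mem _ hne) _ hmem

lemma isFPP_invF {σ : Fin n → Option (Fin n)} (h : IsFPP σ) : IsFPP (invF σ) := by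
  constructor
  · intro i hi
    exact h.1 i ((invF_some_iff h).mp hi)
  · intro i hi
    have hne : (pre σ i).Nonempty := by
      by_contra hc
      exact hi (by unfold invF; rw [dif_neg hc])
    obtain ⟨j, hj⟩ := hne
    have hji : σ j = some i := by simpa [pre] using hj
    have hcard : (pre σ i).card = 1 := by
      have hc := card_pre_fpp h i
      by_cases h0 : σ i = none
      · rw [if_pos h0] at hc
        exact absurd hc (by simpa using (Finset.card_pos.mpr ⟨j, hj⟩).ne')
      · rwa [if_neg h0] at hc
    have h0 : σ i ≠ none := by
      intro h0
      have hc := card_pre_fpp h i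
      rw [if_pos h0] at hc
      simp [hc] at hcard
    obtain ⟨k, hk⟩ := Option.ne_none_iff_exists'.mp h0
    refine ⟨k, ?_⟩
    simp only [pre, Finset.mem_filter, Finset.mem_univ, true_and]
    exact (invF_some_iff h).mpr hk

lemma invF_invF {σ : Fin n → Option (Fin n)} (h : IsFPP σ) : invF (invF σ) = σ := by
  funext i
  cases hi : σ i with
  | some j => exact (invF_some_iff (isFPP_invF h)).mpr ((invF_some_iff h).mpr hi)
  | none =>
    cases hj : invF (invF σ) i with
    | none => rfl
    | some j =>
      have := (invF_some_iff h).mp ((invF_some_iff (isFPP_invF h)).mp hj)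
      rw [hi] at this
      exact absurd this (by simp)

lemma invF_trivial {σ : Fin n → Option (Fin n)} (h : IsFPP σ)
    (htriv : invF σ = fun _ => none) : σ = fun _ => none := by
  funext i
  cases hi : σ i with
  | none => rfl
  | some j =>
    have := (invF_some_iff h).mpr hi
    rw [congrFun htriv j] at this
    exact absurd this (by simp)

end FPP

section Graph

variable {V : Type*} [Fintype V] [DecidableEq V] {n : ℕ}
variable (G : SimpleGraph V) [DecidableRel G.Adj] (P : Fin n → Finset V)

def aZ (v w : V) : ZMod 2 := if G.Adj v w then 1 else 0

def bZ (x : ∀ i, {v // v ∈ P i}) (i : Fin n) (o : Option (Fin n)) : ZMod 2 :=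
  o.elim 1 fun j => aZ G (x i : V) (x j : V)

def W (σ : Fin n → Option (Fin n)) : ZMod 2 :=
  ∑ x : ∀ i, {v // v ∈ P i}, ∏ i, bZ G P x i (σ i)

lemma aZ_comm (v w : V) : aZ G v w = aZ G w v := by
  unfold aZ
  by_cases h : G.Adj v w
  · rw [if_pos h, if_pos (G.adj_symm h)]
  · rw [if_neg h, if_neg (fun h' => h (G.adj_symm h'))]

lemma aZ_mul_symm (v w : V) : aZ G v w * aZ G w v = aZ G v w := by
  unfold aZ
  by_cases h : G.Adj v w
  · rw [if_pos h, if_pos (G.adj_symm h), one_mul]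
  · rw [if_neg h, zero_mul]

lemma prod_b_eq (σ : Fin n → Option (Fin n)) (x : ∀ i, {v // v ∈ P i}) :
    ∏ i, bZ G P x i (σ i)
      = ∏ p ∈ (univ ×ˢ univ).filter (fun p : Fin n × Fin n => σ p.1 = some p.2),
          aZ G (x p.1 : V) (x p.2 : V) := by
  rw [Finset.prod_filter, Finset.prod_product]
  refine Finset.prod_congr rfl fun i _ => ?_
  cases h : σ i with
  | none => simp [bZ, h]
  | some j => simp [bZ, h, eq_comm]

lemma W_invF {σ : Fin n → Option (Fin n)} (h : IsFPP σ) :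
    W G P σ = W G P (invF σ) := by
  unfold W
  refine Finset.sum_congr rfl fun x _ => ?_
  rw [prod_b_eq, prod_b_eq]
  refine Finset.prod_bij' (fun p _ => (p.2, p.1)) (fun p _ => (p.2, p.1))
    ?_ ?_ ?_ ?_ ?_
  · intro p hp
    simp only [Finset.mem_filter, Finset.mem_product, Finset.mem_univ, true_and, and_self,
      and_true] at hp ⊢
    exact (invF_some_iff h).mpr hp
  · intro p hp
    simp only [Finset.mem_filter, Finset.mem_product, Finset.mem_univ, true_and, and_self,
      and_true] at hp ⊢
    exact (invF_some_iff h).mp hp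
  · intro p _; rfl
  · intro p _; rfl
  · intro p _
    exact aZ_comm G _ _

lemma vanish (i₀ j₀ : Fin n) (hne : j₀ ≠ i₀)
    (C : (∀ j : {j : Fin n // j ≠ i₀}, {v // v ∈ P (j : Fin n)}) → ZMod 2)
    (hsum : ∀ w : {v // v ∈ P j₀}, ∑ y : {v // v ∈ P i₀}, aZ G (y : V) (w : V) = 0)
    (F : (∀ i, {v // v ∈ P i}) → ZMod 2)
    (hF : ∀ x, F x = aZ G (x i₀ : V) (x j₀ : V) * C (fun j => x (j : Fin n))) :
    ∑ x, F x = 0 := by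
  classical
  rw [Fintype.sum_equiv (Equiv.piSplitAt i₀ fun i => {v // v ∈ P i}) F
      (fun p => aZ G (p.1 : V) ((p.2 ⟨j₀, hne⟩ : {v // v ∈ P j₀}) : V) * C p.2)
      (fun x => hF x)]
  rw [Fintype.sum_prod_type]
  dsimp only
  rw [Finset.sum_comm]
  refine Finset.sum_eq_zero fun z _ => ?_
  rw [← Finset.sum_mul, hsum (z ⟨j₀, hne⟩), zero_mul]

def vz (v₀ : V) (i₀ : Fin n) (z : ∀ j : {j : Fin n // j ≠ i₀}, {v // v ∈ P (j : Fin n)})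
    (k : Fin n) : V :=
  if h : k = i₀ then v₀ else (z ⟨k, h⟩ : V)

lemma W_fix {σ : Fin n → Option (Fin n)} (hfix : ∃ i, σ i = some i) :
    W G P σ = 0 := by
  obtain ⟨i, hi⟩ := hfix
  refine Finset.sum_eq_zero fun x _ => ?_
  refine Finset.prod_eq_zero (Finset.mem_univ i) ?_
  rw [hi]
  show aZ G (x i : V) (x i : V) = 0
  unfold aZ
  rw [if_neg (G.irrefl)]

lemma W_leaf {σ : Fin n → Option (Fin n)} (i₀ j₀ : Fin n) (hne : j₀ ≠ i₀) (v₀ : V)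
    (hσ : σ i₀ = some j₀) (hno : ∀ k, σ k ≠ some i₀)
    (hsum : ∀ w : {v // v ∈ P j₀}, ∑ y : {v // v ∈ P i₀}, aZ G (y : V) (w : V) = 0) :
    W G P σ = 0 := by
  refine vanish G P i₀ j₀ hne
    (fun z => ∏ k ∈ univ.erase i₀,
      (σ k).elim 1 fun j => aZ G (vz P v₀ i₀ z k) (vz P v₀ i₀ z j))
    hsum _ ?_
  intro x
  rw [← Finset.mul_prod_erase univ _ (Finset.mem_univ i₀)]
  congr 1
  · rw [hσ]; rfl
  · refine Finset.prod_congr rfl fun k hk => ?_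
    have hk' : k ≠ i₀ := (Finset.mem_erase.mp hk).1
    cases hsk : σ k with
    | none => rfl
    | some j =>
      have hji : j ≠ i₀ := by rintro rfl; exact hno k hsk
      show aZ G (x k : V) (x j : V) = _
      simp only [Option.elim, vz, dif_neg hk', dif_neg hji]

lemma W_pair {σ : Fin n → Option (Fin n)} (i₀ j₀ : Fin n) (hne : j₀ ≠ i₀) (v₀ : V)
    (hσ1 : σ i₀ = some j₀) (hσ2 : σ j₀ = some i₀)
    (huniq : ∀ k, σ k = some i₀ → k = j₀)
    (hsum : ∀ w : {v // v ∈ P j₀}, ∑ y : {v // v ∈ P i₀}, aZ G (y : V) (w : V) = 0) :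
    W G P σ = 0 := by
  refine vanish G P i₀ j₀ hne
    (fun z => ∏ k ∈ (univ.erase i₀).erase j₀,
      (σ k).elim 1 fun j => aZ G (vz P v₀ i₀ z k) (vz P v₀ i₀ z j))
    hsum _ ?_
  intro x
  have hj₀mem : j₀ ∈ univ.erase i₀ := Finset.mem_erase.mpr ⟨hne, Finset.mem_univ j₀⟩
  rw [← Finset.mul_prod_erase univ _ (Finset.mem_univ i₀),
      ← Finset.mul_prod_erase _ _ hj₀mem, ← mul_assoc]
  have hb : bZ G P x i₀ (σ i₀) * bZ G P x j₀ (σ j₀)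
      = aZ G (x i₀ : V) (x j₀ : V) := by
    rw [hσ1, hσ2]
    exact aZ_mul_symm G _ _
  rw [hb]
  congr 1
  refine Finset.prod_congr rfl fun k hk => ?_
  have hkj : k ≠ j₀ := (Finset.mem_erase.mp hk).1
  have hk' : k ≠ i₀ := (Finset.mem_erase.mp (Finset.mem_erase.mp hk).2).1
  cases hsk : σ k with
  | none => rfl
  | some j =>
    have hji : j ≠ i₀ := by rintro rfl; exact hkj (huniq k hsk)
    show aZ G (x k : V) (x j : V) = _
    simp only [Option.elim, vz, dif_neg hk', dif_neg hji]

end Graph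

end Stmt0Aux

open Stmt0Aux Finset

/-- parity of Eulerian transversals. -/
theorem stmt_0 {V : Type*} [Fintype V] [DecidableEq V] (n : ℕ)
    (G : SimpleGraph V) (P : Fin n → Finset V)
    (hdisj : ∀ i j, i ≠ j → Disjoint (P i) (P j))
    (hcover : ∀ v : V, ∃ i, v ∈ P i)
    (hodd : ∀ i, Odd (P i).card)
    (hindep : ∀ i, ∀ x ∈ P i, ∀ y ∈ P i, ¬ G.Adj x y)
    (heuler : ∀ i j, i ≠ j → ∀ v ∈ P i, Even {w | w ∈ P j ∧ G.Adj v w}.ncard) :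
    Odd {U : Finset V |
        (∀ i, (U ∩ P i).card = 1) ∧
        (∀ v ∈ U, Even {w | w ∈ U ∧ G.Adj v w}.ncard)}.ncard := by
  classical
  haveI : DecidableRel G.Adj := fun _ _ => Classical.propDecidable _
  -- nonemptiness of parts
  have hPne : ∀ i, (P i).Nonempty := fun i => Finset.card_pos.mp (hodd i).pos
  -- injectivity of transversal functions
  have hxinj : ∀ (x : ∀ i, {v // v ∈ P i}) (i j : Fin n), (x i : V) = (x j : V) → i = j := by
    intro x i j hij
    by_contra hne'
    exact (Finset.disjoint_left.mp (hdisj i j hne') (x i).2) (hij ▸ (x j).2)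
  -- euler sums vanish
  have hsum : ∀ (i₀ j₀ : Fin n), j₀ ≠ i₀ →
      ∀ w : {v // v ∈ P j₀}, ∑ y : {v // v ∈ P i₀}, aZ G (y : V) (w : V) = 0 := by
    intro i₀ j₀ hne w
    have heven := heuler j₀ i₀ (fun h => hne h) (w : V) w.2
    have hset : {u | u ∈ P i₀ ∧ G.Adj (w : V) u}
        = ↑((P i₀).filter fun u => G.Adj (w : V) u) := by
      ext u; simp
    rw [hset, Set.ncard_coe_finset] at heven
    calc ∑ y : {v // v ∈ P i₀}, aZ G (y : V) (w : V)
        = ∑ v ∈ P i₀, aZ G v (w : V) := Finset.sum_coe_sort (P i₀) (fun v => aZ G v (w : V))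
      _ = ∑ v ∈ P i₀, if G.Adj (w : V) v then (1 : ZMod 2) else 0 := by
          refine Finset.sum_congr rfl fun v _ => ?_
          rw [aZ_comm]; rfl
      _ = (((P i₀).filter fun u => G.Adj (w : V) u).card : ZMod 2) := by
          rw [Finset.sum_boole]
      _ = 0 := natCast_even heven
  -- the transversal Finset
  set E : Finset (∀ i, {v // v ∈ P i}) :=
    univ.filter (fun x => ∀ i, Even ((univ.filter fun j => G.Adj (x i : V) (x j : V)).card))
    with hE
  set Φ : (∀ i, {v // v ∈ P i}) → Finset V := fun x => univ.image fun j => (x j : V) with hΦ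
  -- intersection with parts
  have hcap : ∀ (x : ∀ i, {v // v ∈ P i}) (i : Fin n), Φ x ∩ P i = {(x i : V)} := by
    intro x i
    ext v
    simp only [hΦ, Finset.mem_inter, Finset.mem_image, Finset.mem_univ, true_and,
      Finset.mem_singleton]
    constructor
    · rintro ⟨⟨j, rfl⟩, hv⟩
      have : j = i := by
        by_contra hne'
        exact (Finset.disjoint_left.mp (hdisj j i hne') (x j).2) hv
      rw [this]
    · rintro rfl
      exact ⟨⟨i, rfl⟩, (x i).2⟩
  -- degrees match
  have hdeg : ∀ (x : ∀ i, {v // v ∈ P i}) (i : Fin n),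
      {w | w ∈ Φ x ∧ G.Adj (x i : V) w}.ncard
        = (univ.filter fun j => G.Adj (x i : V) (x j : V)).card := by
    intro x i
    have hset : {w | w ∈ Φ x ∧ G.Adj (x i : V) w}
        = ↑((Φ x).filter fun w => G.Adj (x i : V) w) := by
      ext w; simp
    rw [hset, Set.ncard_coe_finset, hΦ]
    have hinj : Function.Injective (fun j : Fin n => ((x j : V))) := fun a b hab =>
      hxinj x a b hab
    rw [Finset.filter_image, Finset.card_image_of_injective _ hinj]
  -- the goal set is finite; identify its card with E.card
  rw [Set.ncard_eq_toFinset_card']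
  have hcard : (Set.toFinset {U : Finset V |
      (∀ i, (U ∩ P i).card = 1) ∧
      (∀ v ∈ U, Even {w | w ∈ U ∧ G.Adj v w}.ncard)}).card = E.card := by
    symm
    refine Finset.card_bij (fun x _ => Φ x) ?_ ?_ ?_
    · intro x hx
      rw [Set.mem_toFinset]
      constructor
      · intro i
        rw [hcap x i, Finset.card_singleton]
      · intro v hv
        simp only [hΦ, Finset.mem_image, Finset.mem_univ, true_and] at hv
        obtain ⟨i, rfl⟩ := hv
        rw [hdeg x i]
        exact (Finset.mem_filter.mp hx).2 i
    · intro x _ x' _ hxx'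
      replace hxx' : Φ x = Φ x' := hxx'
      funext i
      apply Subtype.ext
      have h1 : (x i : V) ∈ Φ x' ∩ P i := by
        rw [← hxx']
        rw [hcap x i]
        exact Finset.mem_singleton_self _
      rw [hcap x' i, Finset.mem_singleton] at h1
      exact h1
    · intro U hU
      rw [Set.mem_toFinset] at hU
      obtain ⟨hU1, hU2⟩ := hU
      have hex : ∀ i, ∃ v, v ∈ U ∩ P i := by
        intro i
        have : 0 < (U ∩ P i).card := by rw [hU1 i]; norm_num
        exact Finset.card_pos.mp this
      choose f hf using hex
      have hfU : ∀ i, f i ∈ U := fun i => (Finset.mem_inter.mp (hf i)).1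
      have hfP : ∀ i, f i ∈ P i := fun i => (Finset.mem_inter.mp (hf i)).2
      set x : ∀ i, {v // v ∈ P i} := fun i => ⟨f i, hfP i⟩ with hx
      have hsingle : ∀ i, U ∩ P i = {f i} := by
        intro i
        obtain ⟨a, ha⟩ := Finset.card_eq_one.mp (hU1 i)
        have := hf i
        rw [ha] at this ⊢
        rw [Finset.mem_singleton] at this
        rw [this]
      have hUx : U = Φ x := by
        apply Finset.Subset.antisymm
        · intro v hv
          obtain ⟨i, hvi⟩ := hcover v
          have hvmem : v ∈ U ∩ P i := Finset.mem_inter.mpr ⟨hv, hvi⟩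
          rw [hsingle i, Finset.mem_singleton] at hvmem
          simp only [hΦ, Finset.mem_image, Finset.mem_univ, true_and]
          exact ⟨i, hvmem.symm⟩
        · intro v hv
          simp only [hΦ, Finset.mem_image, Finset.mem_univ, true_and] at hv
          obtain ⟨i, rfl⟩ := hv
          exact hfU i
      refine ⟨x, ?_, hUx.symm⟩
      rw [hE, Finset.mem_filter]
      refine ⟨Finset.mem_univ x, fun i => ?_⟩
      have := hU2 (f i) (hfU i)
      rw [hUx] at this
      rw [← hdeg x i]
      exact this
  rw [hcard]
  -- now show E.card is odd, via ZMod 2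
  suffices hcast : ((E.card : ZMod 2)) = 1 by
    rcases Nat.even_or_odd E.card with he | ho
    · rw [natCast_even he] at hcast
      exact absurd hcast (by decide)
    · exact ho
  -- E.card = sum of products
  have h1 : ((E.card : ZMod 2))
      = ∑ x : ∀ i, {v // v ∈ P i}, ∏ i, (1 + ∑ j, aZ G (x i : V) (x j : V)) := by
    rw [hE, ← Finset.sum_boole]
    refine Finset.sum_congr rfl fun x _ => ?_
    have hfac : ∀ i, (1 + ∑ j, aZ G (x i : V) (x j : V))
        = if Even ((univ.filter fun j => G.Adj (x i : V) (x j : V)).card) then 1 else 0 := by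
      intro i
      have hs : ∑ j, aZ G (x i : V) (x j : V)
          = (((univ.filter fun j => G.Adj (x i : V) (x j : V))).card : ZMod 2) := by
        unfold aZ
        rw [Finset.sum_boole]
      rw [hs]
      rcases Nat.even_or_odd ((univ.filter fun j => G.Adj (x i : V) (x j : V)).card) with h | h
      · rw [natCast_even h, if_pos h, add_zero]
      · rw [natCast_odd h, if_neg (by simpa using Nat.not_even_iff_odd.mpr h)]
        decide
    rw [Finset.prod_congr rfl (fun i _ => hfac i), Fintype.prod_boole]
    by_cases hall : ∀ i, Even ((univ.filter fun j => G.Adj (x i : V) (x j : V)).card)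
    · rw [if_pos hall, if_pos hall]
    · rw [if_neg hall, if_neg hall]
  rw [h1]
  -- expand into sum over σ
  have h2 : ∀ x : ∀ i, {v // v ∈ P i},
      ∏ i, (1 + ∑ j, aZ G (x i : V) (x j : V))
        = ∑ σ : Fin n → Option (Fin n), ∏ i, bZ G P x i (σ i) := by
    intro x
    have : ∀ i, (1 + ∑ j, aZ G (x i : V) (x j : V)) = ∑ o : Option (Fin n), bZ G P x i o := by
      intro i
      rw [univ_option, Finset.sum_insertNone]
      rfl
    rw [Finset.prod_congr rfl (fun i _ => this i)]
    exact Fintype.prod_sum fun i o => bZ G P x i o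
  rw [Finset.sum_congr rfl (fun x _ => h2 x), Finset.sum_comm]
  -- now ∑ σ, W σ
  have hWdef : ∀ σ : Fin n → Option (Fin n),
      ∑ x : ∀ i, {v // v ∈ P i}, ∏ i, bZ G P x i (σ i) = W G P σ := fun _ => rfl
  rw [Finset.sum_congr rfl (fun σ _ => hWdef σ)]
  -- split off the trivial σ
  rw [← Finset.add_sum_erase univ (W G P) (Finset.mem_univ (fun _ => none))]
  have htriv : W G P (fun _ => none) = 1 := by
    unfold W
    have : ∀ x : ∀ i, {v // v ∈ P i}, ∏ i : Fin n, bZ G P x i none = 1 := by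
      intro x
      exact Finset.prod_const_one
    rw [Finset.sum_congr rfl (fun x _ => this x), Finset.sum_const, Finset.card_univ,
      nsmul_eq_mul, mul_one]
    rw [Fintype.card_pi]
    have : ∀ i : Fin n, Fintype.card {v // v ∈ P i} = (P i).card := fun i => Fintype.card_coe _
    rw [Finset.prod_congr rfl (fun i _ => this i)]
    rw [Nat.cast_prod]
    rw [Finset.prod_congr rfl (fun i _ => natCast_odd (hodd i))]
    exact Finset.prod_const_one
  have hrest : ∑ σ ∈ univ.erase (fun _ => none), W G P σ = 0 := by
    refine Finset.sum_involution
      (fun σ _ => if IsFPP σ then invF σ else σ) ?_ ?_ ?_ ?_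
    · intro σ _
      show W G P σ + W G P (if IsFPP σ then invF σ else σ) = 0
      have : W G P (if IsFPP σ then invF σ else σ) = W G P σ := by
        by_cases hf : IsFPP σ
        · rw [if_pos hf, ← W_invF G P hf]
        · rw [if_neg hf]
      rw [this, CharTwo.add_self_eq_zero]
    · -- g ≠ id on nonzero terms
      intro σ hσ hW
      rw [Finset.mem_erase] at hσ
      intro hgσ
      replace hgσ : (if IsFPP σ then invF σ else σ) = σ := hgσ
      apply hW
      by_cases hf : IsFPP σ
      · -- self-inverse fpp, nonempty support
        rw [if_pos hf] at hgσ
        have hnt : σ ≠ fun _ => none := hσ.1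
        have hex : ∃ i, σ i ≠ none := by
          by_contra hc
          push_neg at hc
          exact hnt (funext fun i => hc i)
        obtain ⟨i₀, hi₀⟩ := hex
        obtain ⟨j₀, hj₀⟩ := Option.ne_none_iff_exists'.mp hi₀
        have hne : j₀ ≠ i₀ := by rintro rfl; exact hf.1 _ hj₀
        have hσj : σ j₀ = some i₀ := by
          have := (invF_some_iff hf).mpr hj₀
          rwa [hgσ] at this
        have huniq : ∀ k, σ k = some i₀ → k = j₀ := by
          intro k hk
          have h1 : invF σ i₀ = some j₀ := by
            rw [hgσ]; exact hj₀
          have h2 : invF σ i₀ = some k := (invF_some_iff hf).mpr hk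
          rw [h1] at h2
          exact (Option.some_inj.mp h2).symm
        exact W_pair G P i₀ j₀ hne (hPne i₀).choose hj₀ hσj huniq (hsum i₀ j₀ hne)
      · -- not fpp: fixed point or leaf
        unfold IsFPP at hf
        push_neg at hf
        by_cases hfix : ∃ i, σ i = some i
        · exact W_fix G P hfix
        · push_neg at hfix
          obtain ⟨i₀, hi₀ne, hi₀empty⟩ := hf (fun i => hfix i)
          obtain ⟨j₀, hj₀⟩ := Option.ne_none_iff_exists'.mp hi₀ne
          have hne : j₀ ≠ i₀ := by rintro rfl; exact hfix _ hj₀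
          have hno : ∀ k, σ k ≠ some i₀ := by
            intro k hk
            exact (Finset.nonempty_iff_ne_empty.mp ⟨k, by simp [pre, hk]⟩) hi₀empty
          exact W_leaf G P i₀ j₀ hne (hPne i₀).choose hj₀ hno (hsum i₀ j₀ hne)
    · -- g_mem
      intro σ hσ
      show (if IsFPP σ then invF σ else σ) ∈ univ.erase (fun _ => none)
      rw [Finset.mem_erase] at hσ ⊢
      refine ⟨?_, Finset.mem_univ _⟩
      by_cases hf : IsFPP σ
      · rw [if_pos hf]
        intro hc
        exact hσ.1 (invF_trivial hf hc)
      · rw [if_neg hf]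
        exact hσ.1
    · -- involution
      intro σ hσ
      show (if IsFPP (if IsFPP σ then invF σ else σ) then invF (if IsFPP σ then invF σ else σ)
          else if IsFPP σ then invF σ else σ) = σ
      by_cases hf : IsFPP σ
      · rw [if_pos hf, if_pos (isFPP_invF hf)]
        exact invF_invF hf
      · rw [if_neg hf, if_neg hf]
  rw [hrest, htriv, add_zero]
end

section
/- Fix a finite set V partitioned into disjoint odd-size sets V_1, ..., V_n and a graph G on V in which each V_i is independent and each induced bipartite subgraph on V_i ∪ V_j is Eulerian. Call a sequence (x_1,...,x_n,y_1,...,y_n) special if x_i ∈ V_i, y_i ∈ {x_1,...,x_n}, and for each i either y_i = x_i or {x_i, y_i} is an edge of G. Then the number of special sequences is odd. -/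
open Finset

section Aux

variable {V : Type*} [Fintype V] [DecidableEq V] {n : ℕ}

private lemma evenCast {c : ℕ} (h : Even c) : (c : ZMod 2) = 0 := by
  obtain ⟨t, rfl⟩ := h
  push_cast
  ring_nf
  have h2 : (2 : ZMod 2) = 0 := rfl
  rw [h2, mul_zero]

private lemma oddCast {c : ℕ} (h : Odd c) : (c : ZMod 2) = 1 := by
  obtain ⟨t, rfl⟩ := h
  push_cast
  have h2 : (2 : ZMod 2) = 0 := rfl
  rw [h2]; ring

open Classical in
/-- The weight: 1 if v = u or adjacent, else 0, in ZMod 2. -/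
private noncomputable def Fw (G : SimpleGraph V) (u v : V) : ZMod 2 :=
  if v = u ∨ G.Adj u v then 1 else 0

private lemma Fw_self (G : SimpleGraph V) (u : V) : Fw G u u = 1 := by
  rw [Fw, if_pos (Or.inl rfl)]

private lemma Fw_symm (G : SimpleGraph V) (u v : V) : Fw G u v = Fw G v u := by
  classical
  rw [Fw, Fw]
  congr 1
  simp only [eq_iff_iff]
  constructor
  · rintro (h | h); exact Or.inl h.symm; exact Or.inr h.symm
  · rintro (h | h); exact Or.inl h.symm; exact Or.inr h.symm

private lemma Fw_eq (G : SimpleGraph V) (u v : V) [Decidable (v = u ∨ G.Adj u v)] :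
    Fw G u v = if v = u ∨ G.Adj u v then 1 else 0 := by
  rw [Fw]
  by_cases h : v = u ∨ G.Adj u v
  · rw [if_pos h, if_pos h]
  · rw [if_neg h, if_neg h]

private lemma Fw_sq (G : SimpleGraph V) (u v : V) : Fw G u v * Fw G u v = Fw G u v := by
  have : ∀ a : ZMod 2, a * a = a := by decide
  exact this _

/-- Workhorse: sum over transversals of B x * Fw (x k) (x m) vanishes. -/
private lemma lemW (G : SimpleGraph V) (P : Fin n → Finset V)
    (hdisj : ∀ i j, i ≠ j → Disjoint (P i) (P j))
    (heuler : ∀ i j, i ≠ j → ∀ v ∈ P i, Even {w | w ∈ P j ∧ G.Adj v w}.ncard)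
    (k m : Fin n) (hkm : k ≠ m) (hk : (P k).Nonempty)
    (B : (Fin n → V) → ZMod 2)
    (hB : ∀ x v, B (Function.update x k v) = B x) :
    ∑ x ∈ Fintype.piFinset P, B x * Fw G (x k) (x m) = 0 := by
  classical
  obtain ⟨w0, hw0⟩ := hk
  set Q := Fintype.piFinset (Function.update P k {w0}) with hQ
  have key : ∑ x ∈ Fintype.piFinset P, B x * Fw G (x k) (x m)
      = ∑ q ∈ (P k) ×ˢ Q, B q.2 * Fw G q.1 (q.2 m) := by
    refine Finset.sum_bij' (fun x _ => (x k, Function.update x k w0))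
      (fun q _ => Function.update q.2 k q.1) ?_ ?_ ?_ ?_ ?_
    · intro x hx
      rw [Fintype.mem_piFinset] at hx
      rw [Finset.mem_product]
      constructor
      · exact hx k
      · rw [hQ, Fintype.mem_piFinset]
        intro i
        by_cases hik : i = k
        · subst hik; simp
        · show Function.update x k w0 i ∈ Function.update P k {w0} i
          rw [Function.update_of_ne hik, Function.update_of_ne hik]
          exact hx i
    · intro q hq
      rw [Finset.mem_product] at hq
      rw [Fintype.mem_piFinset]
      intro i
      show Function.update q.2 k q.1 i ∈ P i
      by_cases hik : i = k
      · subst hik; rw [Function.update_self]; exact hq.1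
      · rw [Function.update_of_ne hik]
        have := (Fintype.mem_piFinset.mp hq.2) i
        rwa [Function.update_of_ne hik] at this
    · intro x hx
      show Function.update (Function.update x k w0) k (x k) = x
      rw [Function.update_idem, Function.update_eq_self]
    · intro q hq
      rw [Finset.mem_product] at hq
      have hqk : q.2 k = w0 := by
        have := (Fintype.mem_piFinset.mp hq.2) k
        rwa [Function.update_self, Finset.mem_singleton] at this
      show (Function.update q.2 k q.1 k, Function.update (Function.update q.2 k q.1) k w0) = q
      rw [Function.update_self, Function.update_idem, ← hqk, Function.update_eq_self]
    · intro x hx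
      show B x * Fw G (x k) (x m)
        = B (Function.update x k w0) * Fw G (x k) (Function.update x k w0 m)
      rw [hB, Function.update_of_ne (Ne.symm hkm)]
  rw [key, Finset.sum_product, Finset.sum_comm]
  refine Finset.sum_eq_zero ?_
  intro y hy
  have hym : y m ∈ P m := by
    have := (Fintype.mem_piFinset.mp hy) m
    rwa [Function.update_of_ne (Ne.symm hkm)] at this
  have hinner : ∀ v ∈ P k, Fw G v (y m) = if G.Adj (y m) v then 1 else 0 := by
    intro v hv
    have hne : y m ≠ v := by
      intro h
      exact Finset.disjoint_left.mp (hdisj k m hkm) hv (h ▸ hym)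
    rw [Fw]
    by_cases hadj : G.Adj (y m) v
    · rw [if_pos (Or.inr hadj.symm), if_pos hadj]
    · rw [if_neg, if_neg hadj]
      rintro (h | h)
      · exact hne h
      · exact hadj h.symm
  calc ∑ v ∈ P k, B y * Fw G v (y m)
      = B y * ∑ v ∈ P k, Fw G v (y m) := by rw [Finset.mul_sum]
    _ = B y * ∑ v ∈ P k, if G.Adj (y m) v then 1 else 0 := by
        rw [Finset.sum_congr rfl hinner]
    _ = B y * (((P k).filter (fun v => G.Adj (y m) v)).card : ZMod 2) := by
        rw [Finset.sum_boole]
    _ = 0 := by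
        have hev : Even ((P k).filter (fun v => G.Adj (y m) v)).card := by
          have := heuler m k (Ne.symm hkm) (y m) hym
          have hset : {w | w ∈ P k ∧ G.Adj (y m) w}
              = ↑((P k).filter (fun v => G.Adj (y m) v)) := by
            ext w; simp
          rwa [hset, Set.ncard_coe_finset] at this
        rw [evenCast hev, mul_zero]


/-- The summand for a "direction function" g. -/
private noncomputable def cfun (G : SimpleGraph V) (P : Fin n → Finset V)
    (g : Fin n → Fin n) : ZMod 2 :=
  ∑ x ∈ Fintype.piFinset P, ∏ i, Fw G (x i) (x (g i))

/-- Non-bijective g contribute 0. -/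
private lemma lemA (G : SimpleGraph V) (P : Fin n → Finset V)
    (hdisj : ∀ i j, i ≠ j → Disjoint (P i) (P j))
    (heuler : ∀ i j, i ≠ j → ∀ v ∈ P i, Even {w | w ∈ P j ∧ G.Adj v w}.ncard)
    (hne : ∀ i, (P i).Nonempty)
    (g : Fin n → Fin n) (hg : ¬ Function.Bijective g) :
    cfun G P g = 0 := by
  classical
  have hsurj : ¬ Function.Surjective g := fun h => hg (Finite.surjective_iff_bijective.mp h)
  simp only [Function.Surjective, not_forall, not_exists] at hsurj
  obtain ⟨k, hk⟩ := hsurj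
  have hgk : g k ≠ k := fun h => hk k h
  have step : cfun G P g = ∑ x ∈ Fintype.piFinset P,
      (∏ i ∈ Finset.univ.erase k, Fw G (x i) (x (g i))) * Fw G (x k) (x (g k)) := by
    rw [cfun]
    refine Finset.sum_congr rfl (fun x _ => ?_)
    rw [Finset.prod_erase_mul _ _ (Finset.mem_univ k)]
  rw [step]
  refine lemW G P hdisj heuler k (g k) (Ne.symm hgk) (hne k)
    (fun x => ∏ i ∈ Finset.univ.erase k, Fw G (x i) (x (g i))) ?_
  intro x v
  refine Finset.prod_congr rfl (fun i hi => ?_)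
  have hik : i ≠ k := (Finset.mem_erase.mp hi).1
  rw [Function.update_of_ne hik, Function.update_of_ne (fun h => hk i h)]

/-- Nontrivial involutions contribute 0. -/
private lemma lemB (G : SimpleGraph V) (P : Fin n → Finset V)
    (hdisj : ∀ i j, i ≠ j → Disjoint (P i) (P j))
    (heuler : ∀ i j, i ≠ j → ∀ v ∈ P i, Even {w | w ∈ P j ∧ G.Adj v w}.ncard)
    (hne : ∀ i, (P i).Nonempty)
    (σ : Equiv.Perm (Fin n)) (hinv : σ⁻¹ = σ) (hσ : σ ≠ 1) :
    cfun G P ⇑σ = 0 := by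
  classical
  obtain ⟨k, hk⟩ : ∃ k, σ k ≠ k := by
    by_contra h
    push_neg at h
    exact hσ (Equiv.ext h)
  set m := σ k with hm
  have hkm : k ≠ m := fun h => hk h.symm
  have hσm : σ m = k := by
    have : σ⁻¹ (σ k) = k := σ.symm_apply_apply k
    rw [hinv] at this
    rw [hm]; exact this
  have hmem : m ∈ Finset.univ.erase k := Finset.mem_erase.mpr ⟨Ne.symm hkm, Finset.mem_univ m⟩
  have step : cfun G P ⇑σ = ∑ x ∈ Fintype.piFinset P,
      (∏ i ∈ (Finset.univ.erase k).erase m, Fw G (x i) (x (σ i))) * Fw G (x k) (x m) := by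
    rw [cfun]
    refine Finset.sum_congr rfl (fun x _ => ?_)
    rw [← Finset.prod_erase_mul _ _ (Finset.mem_univ k),
        ← Finset.prod_erase_mul _ _ hmem]
    have h1 : Fw G (x m) (x (σ m)) = Fw G (x k) (x m) := by
      rw [hσm, Fw_symm]
    rw [h1, mul_assoc, Fw_sq]
  rw [step]
  refine lemW G P hdisj heuler k m hkm (hne k)
    (fun x => ∏ i ∈ (Finset.univ.erase k).erase m, Fw G (x i) (x (σ i))) ?_
  intro x v
  refine Finset.prod_congr rfl (fun i hi => ?_)
  rw [Finset.mem_erase, Finset.mem_erase] at hi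
  have him : i ≠ m := hi.1
  have hik : i ≠ k := hi.2.1
  have hσik : σ i ≠ k := by
    intro h
    apply him
    have h2 : σ i = σ m := by rw [h, hσm]
    exact σ.injective h2
  rw [Function.update_of_ne hik, Function.update_of_ne hσik]

/-- Inverse permutations give the same contribution. -/
private lemma lemD (G : SimpleGraph V) (P : Fin n → Finset V) (σ : Equiv.Perm (Fin n)) :
    cfun G P ⇑σ = cfun G P ⇑σ⁻¹ := by
  rw [cfun, cfun]
  refine Finset.sum_congr rfl (fun x _ => ?_)
  have := Equiv.prod_comp σ (fun i => Fw G (x i) (x (σ⁻¹ i)))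
  rw [← this]
  refine Finset.prod_congr rfl (fun i _ => ?_)
  rw [show σ⁻¹ (σ i) = i from σ.symm_apply_apply i, Fw_symm]

/-- Identity contributes 1. -/
private lemma lemC (G : SimpleGraph V) (P : Fin n → Finset V)
    (hodd : ∀ i, Odd (P i).card) :
    cfun G P id = 1 := by
  classical
  rw [cfun]
  have : ∀ x ∈ Fintype.piFinset P, (∏ i, Fw G (x i) (x (id i))) = 1 := by
    intro x _
    refine Finset.prod_eq_one (fun i _ => ?_)
    exact Fw_self G (x i)
  rw [Finset.sum_congr rfl this, Finset.sum_const, nsmul_eq_mul, mul_one,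
      Fintype.card_piFinset]
  rw [Nat.cast_prod]
  refine Finset.prod_eq_one (fun i _ => ?_)
  exact oddCast (hodd i)

/-- Total sum over all direction functions is 1. -/
private lemma lemTotal (G : SimpleGraph V) (P : Fin n → Finset V)
    (hdisj : ∀ i j, i ≠ j → Disjoint (P i) (P j))
    (heuler : ∀ i j, i ≠ j → ∀ v ∈ P i, Even {w | w ∈ P j ∧ G.Adj v w}.ncard)
    (hodd : ∀ i, Odd (P i).card) :
    ∑ g : Fin n → Fin n, cfun G P g = 1 := by
  classical
  have hne : ∀ i, (P i).Nonempty := fun i =>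
    Finset.card_pos.mp (Nat.pos_of_ne_zero (fun h => by simpa [h] using hodd i))
  rw [← Finset.sum_filter_add_sum_filter_not Finset.univ Function.Bijective (cfun G P)]
  have h2 : ∑ g ∈ Finset.univ.filter (fun g => ¬ Function.Bijective g), cfun G P g = 0 := by
    refine Finset.sum_eq_zero (fun g hg => ?_)
    exact lemA G P hdisj heuler hne g (Finset.mem_filter.mp hg).2
  have h1 : ∑ g ∈ Finset.univ.filter Function.Bijective, cfun G P g
      = ∑ σ : Equiv.Perm (Fin n), cfun G P ⇑σ := by
    symm
    refine Finset.sum_bij' (fun σ _ => ⇑σ)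
      (fun g hg => Equiv.ofBijective g (Finset.mem_filter.mp hg).2) ?_ ?_ ?_ ?_ ?_
    · intro σ _
      exact Finset.mem_filter.mpr ⟨Finset.mem_univ _, σ.bijective⟩
    · intro g hg; exact Finset.mem_univ _
    · intro σ _; exact Equiv.ext (fun i => rfl)
    · intro g hg; rfl
    · intro σ _; rfl
  have h3 : ∑ σ : Equiv.Perm (Fin n), cfun G P ⇑σ = 1 := by
    rw [← Finset.add_sum_erase _ _ (Finset.mem_univ (1 : Equiv.Perm (Fin n)))]
    have hid : cfun G P ⇑(1 : Equiv.Perm (Fin n)) = 1 := by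
      have : ⇑(1 : Equiv.Perm (Fin n)) = id := rfl
      rw [this]; exact lemC G P hodd
    have hrest : ∑ σ ∈ Finset.univ.erase (1 : Equiv.Perm (Fin n)), cfun G P ⇑σ = 0 := by
      refine Finset.sum_involution (fun σ _ => σ⁻¹) ?_ ?_ ?_ ?_
      · intro σ _
        rw [← lemD]
        exact CharTwo.add_self_eq_zero _
      · intro σ hσ hc hinv
        exact hc (lemB G P hdisj heuler hne σ hinv (Finset.mem_erase.mp hσ).1)
      · intro σ hσ
        refine Finset.mem_erase.mpr ⟨?_, Finset.mem_univ _⟩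
        intro h
        exact (Finset.mem_erase.mp hσ).1 (by rwa [inv_eq_one] at h)
      · intro σ _; exact inv_inv σ
    rw [hid, hrest, add_zero]
  rw [h1, h2, h3, add_zero]

end Aux

/-- the number of special sequences is odd. -/
theorem stmt_1 {V : Type*} [Fintype V] [DecidableEq V] (n : ℕ)
    (G : SimpleGraph V) (P : Fin n → Finset V)
    (hdisj : ∀ i j, i ≠ j → Disjoint (P i) (P j))
    (hcover : ∀ v : V, ∃ i, v ∈ P i)
    (hodd : ∀ i, Odd (P i).card)
    (hindep : ∀ i, ∀ x ∈ P i, ∀ y ∈ P i, ¬ G.Adj x y)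
    (heuler : ∀ i j, i ≠ j → ∀ v ∈ P i, Even {w | w ∈ P j ∧ G.Adj v w}.ncard) :
    Odd {p : (Fin n → V) × (Fin n → V) |
        (∀ i, p.1 i ∈ P i) ∧
        (∀ i, p.2 i ∈ Set.range p.1) ∧
        (∀ i, p.2 i = p.1 i ∨ G.Adj (p.1 i) (p.2 i))}.ncard := by
  classical
  set cond : (Fin n → V) × (Fin n → V) → Prop := fun p =>
    (∀ i, p.1 i ∈ P i) ∧
    (∀ i, p.2 i ∈ Set.range p.1) ∧
    (∀ i, p.2 i = p.1 i ∨ G.Adj (p.1 i) (p.2 i)) with hcond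
  have hset : {p : (Fin n → V) × (Fin n → V) |
      (∀ i, p.1 i ∈ P i) ∧
      (∀ i, p.2 i ∈ Set.range p.1) ∧
      (∀ i, p.2 i = p.1 i ∨ G.Adj (p.1 i) (p.2 i))}
      = ↑(Finset.univ.filter cond) := by
    ext p
    simp [hcond]
  rw [hset, Set.ncard_coe_finset]
  -- the per-transversal choice sets
  set T : (Fin n → V) → Fin n → Finset V := fun x i =>
    Finset.univ.filter (fun v => v ∈ Set.range x ∧ (v = x i ∨ G.Adj (x i) v)) with hT
  -- step 1 : fiber decomposition
  have hfiber : (Finset.univ.filter cond).card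
      = ∑ x ∈ Fintype.piFinset P, ∏ i, (T x i).card := by
    have hmaps : ∀ p ∈ Finset.univ.filter cond, p.1 ∈ Fintype.piFinset P := by
      intro p hp
      rw [Fintype.mem_piFinset]
      exact ((Finset.mem_filter.mp hp).2).1
    rw [Finset.card_eq_sum_card_fiberwise hmaps]
    refine Finset.sum_congr rfl (fun x hx => ?_)
    have hxP : ∀ i, x i ∈ P i := Fintype.mem_piFinset.mp hx
    have hcard1 : ((Finset.univ.filter cond).filter (fun p => p.1 = x)).card
        = (Fintype.piFinset (T x)).card := by
      refine Finset.card_bij' (fun p _ => p.2) (fun y _ => (x, y)) ?_ ?_ ?_ ?_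
      · intro p hp
        rw [Finset.mem_filter, Finset.mem_filter] at hp
        obtain ⟨⟨-, hc⟩, h1⟩ := hp
        rw [Fintype.mem_piFinset]
        intro i
        rw [hT]
        simp only [Finset.mem_filter, Finset.mem_univ, true_and]
        rw [hcond] at hc
        exact ⟨by rw [← h1]; exact hc.2.1 i, by rw [← h1]; exact hc.2.2 i⟩
      · intro y hy
        rw [Fintype.mem_piFinset] at hy
        rw [Finset.mem_filter, Finset.mem_filter]
        refine ⟨⟨Finset.mem_univ _, ?_⟩, rfl⟩
        rw [hcond]
        refine ⟨hxP, fun i => ?_, fun i => ?_⟩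
        · have := hy i
          rw [hT] at this
          simp only [Finset.mem_filter, Finset.mem_univ, true_and] at this
          exact this.1
        · have := hy i
          rw [hT] at this
          simp only [Finset.mem_filter, Finset.mem_univ, true_and] at this
          exact this.2
      · intro p hp
        rw [Finset.mem_filter] at hp
        exact Prod.ext hp.2.symm rfl
      · intro y hy; rfl
    rw [hcard1, Fintype.card_piFinset]
  rw [hfiber]
  -- parity computation
  have hpar : ((∑ x ∈ Fintype.piFinset P, ∏ i, (T x i).card : ℕ) : ZMod 2) = 1 := by
    push_cast
    have hstep : ∀ x ∈ Fintype.piFinset P,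
        (∏ i, ((T x i).card : ZMod 2)) = ∏ i, ∑ j, Fw G (x i) (x j) := by
      intro x hx
      have hxP : ∀ i, x i ∈ P i := Fintype.mem_piFinset.mp hx
      have hinj : Function.Injective x := by
        intro i j hij
        by_contra hne
        exact Finset.disjoint_left.mp (hdisj i j hne) (hxP i) (hij ▸ hxP j)
      refine Finset.prod_congr rfl (fun i _ => ?_)
      have h1 : T x i = (Finset.univ.image x).filter
          (fun v => v = x i ∨ G.Adj (x i) v) := by
        rw [hT]
        ext v
        simp [Set.mem_range, eq_comm]
      have h2 : (T x i).card
          = (Finset.univ.filter (fun j => x j = x i ∨ G.Adj (x i) (x j))).card := by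
        rw [h1, Finset.filter_image, Finset.card_image_of_injective _ hinj]
      rw [h2, ← Finset.sum_boole]
      refine Finset.sum_congr rfl (fun j _ => ?_)
      rw [Fw_eq]
    rw [Finset.sum_congr rfl hstep]
    have hexp : ∀ x ∈ Fintype.piFinset P,
        (∏ i, ∑ j, Fw G (x i) (x j))
        = ∑ g : Fin n → Fin n, ∏ i, Fw G (x i) (x (g i)) := by
      intro x _
      rw [Finset.prod_univ_sum (fun _ => Finset.univ) (fun i j => Fw G (x i) (x j))]
      rw [Fintype.piFinset_univ]
    rw [Finset.sum_congr rfl hexp, Finset.sum_comm]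
    exact lemTotal G P hdisj heuler hodd
  -- conclude oddness
  rw [Nat.odd_iff]
  rcases Nat.mod_two_eq_zero_or_one (∑ x ∈ Fintype.piFinset P, ∏ i, (T x i).card) with h0 | h1
  · exfalso
    rw [← ZMod.natCast_mod, h0] at hpar
    simp at hpar
  · exact h1
end

section
/- Let P_1, ..., P_n be closed polygonal lines inscribed in a circle, each with an odd number of edges, such that no two polygonal lines share a vertex and all vertices are distinct points on the circle. Then the number of ways to choose one edge s_i from each P_i so that every chosen edge (chord) crosses an even number of other chosen chords is odd. -/
/-- `circBtw a b c` : the point with angle `b` lies strictly between the points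
with angles `a` and `c`, going counterclockwise (angles taken in `[0, 2π)`). -/
def circBtw (a b c : ℝ) : Prop :=
  if a < c then a < b ∧ b < c else a < b ∨ b < c

/-- Two chords of the circle, with endpoint angles `{a,b}` and `{c,d}`, cross
iff their endpoints alternate around the circle. -/
def chordsCross (a b c d : ℝ) : Prop :=
  Xor' (circBtw a c b) (circBtw a d b)


open Finset Function

lemma chordsCross_comm {a b c d : ℝ} (hab : a ≠ b) (hac : a ≠ c) (had : a ≠ d)
    (hbc : b ≠ c) (hbd : b ≠ d) (hcd : c ≠ d) :
    chordsCross a b c d ↔ chordsCross c d a b := by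
  rcases lt_or_gt_of_ne hab with h1 | h1 <;>
  rcases lt_or_gt_of_ne hcd with h2 | h2 <;>
  rcases lt_or_gt_of_ne hac with h3 | h3 <;>
  rcases lt_or_gt_of_ne had with h4 | h4 <;>
  rcases lt_or_gt_of_ne hbc with h5 | h5 <;>
  rcases lt_or_gt_of_ne hbd with h6 | h6 <;>
  first
  | (exfalso; linarith)
  | simp only [chordsCross, circBtw, Xor', h1, h2, h3, h4, h5, h6,
      h1.asymm, h2.asymm, h3.asymm, h4.asymm, h5.asymm, h6.asymm,
      if_true, if_false, not_lt_of_gt, if_pos, if_neg] <;> tauto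



lemma zmod2_mul_self (x : ZMod 2) : x * x = x := by revert x; decide
lemma zmod2_add_self (x : ZMod 2) : x + x = 0 := by revert x; decide

lemma odd_cast_zmod2 {c : ℕ} (hc : Odd c) : (c : ZMod 2) = 1 := by
  obtain ⟨t, rfl⟩ := hc
  push_cast
  rw [show ((2 : ZMod 2)) = 0 by decide]
  ring

lemma odd_nsmul_zmod2 {c : ℕ} (hc : Odd c) (x : ZMod 2) : c • x = x := by
  rw [nsmul_eq_mul, odd_cast_zmod2 hc, one_mul]

lemma sum_zero_of_update {n : ℕ} {E : Fin n → Type*} [∀ i, Fintype (E i)]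
    (hodd : ∀ i, Odd (Fintype.card (E i))) (k : Fin n)
    (f : (∀ i, E i) → ZMod 2)
    (h : ∀ s : ∀ i, E i, ∑ x : E k, f (update s k x) = 0) :
    ∑ s : ∀ i, E i, f s = 0 := by
  have key : ∑ p : (∀ i, E i) × E k, f (update p.1 k p.2) = 0 := by
    rw [Fintype.sum_prod_type]
    simp [h]
  have : ∑ p : (∀ i, E i) × E k, f (update p.1 k p.2)
      = ∑ q : (∀ i, E i) × E k, f q.1 := by
    refine Fintype.sum_equiv
      ⟨fun p => (update p.1 k p.2, p.1 k), fun p => (update p.1 k p.2, p.1 k),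
        fun p => by simp [update_idem, update_eq_self],
        fun p => by simp [update_idem, update_eq_self]⟩ _ _ fun p => rfl
  rw [this, Fintype.sum_prod_type] at key
  simp only [Finset.sum_const, Finset.card_univ] at key
  calc ∑ s : ∀ i, E i, f s = ∑ s : ∀ i, E i, (Fintype.card (E k)) • f s := by
        refine Finset.sum_congr rfl fun s _ => ?_
        rw [odd_nsmul_zmod2 (hodd k)]
    _ = 0 := key
section
variable {n : ℕ} {E : Fin n → Type*} [∀ i, Fintype (E i)]
  (C : ∀ i j : Fin n, E i → E j → ZMod 2)

/-- weight of an optional partner -/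
def ww (C : ∀ i j : Fin n, E i → E j → ZMod 2) (s : ∀ i, E i) (i : Fin n) :
    Option (Fin n) → ZMod 2
  | none => 1
  | some j => C i j (s i) (s j)

lemma ww_none (s : ∀ i, E i) (i : Fin n) : ww C s i none = 1 := rfl
lemma ww_some (s : ∀ i, E i) (i j : Fin n) : ww C s i (some j) = C i j (s i) (s j) := rfl

variable (hodd : ∀ i, Odd (Fintype.card (E i)))
  (hsymm : ∀ i j x y, i ≠ j → C i j x y = C j i y x)
  (hrow : ∀ i j, i ≠ j → ∀ y : E j, ∑ x : E i, C i j x y = 0)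

include hodd hsymm hrow in
/-- Case A1 : k in support and no preimage. -/
lemma zeroA1 (g : Fin n → Option (Fin n)) (k j : Fin n)
    (hkj : g k = some j) (hjk : j ≠ k)
    (hpre : ∀ i, g i ≠ some k) :
    ∑ s : ∀ i, E i, ∏ i, ww C s i (g i) = 0 := by
  refine sum_zero_of_update hodd k _ fun s => ?_
  have hfac : ∀ x : E k, ∏ i, ww C (update s k x) i (g i)
      = C k j x (s j) * ∏ i ∈ univ.erase k, ww C s i (g i) := by
    intro x
    rw [← Finset.mul_prod_erase univ _ (mem_univ k), hkj]
    congr 1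
    · rw [ww_some, update_self, update_of_ne hjk]
    · refine Finset.prod_congr rfl fun i hi => ?_
      rcases hgi : g i with _ | j'
      · rfl
      · have hik : i ≠ k := (Finset.mem_erase.mp hi).1
        have hjk' : j' ≠ k := fun h => hpre i (h ▸ hgi)
        rw [ww_some, ww_some, update_of_ne hik, update_of_ne hjk']
  simp only [hfac]
  rw [← Finset.sum_mul, hrow k j (fun h => hjk (h ▸ rfl)) (s j), zero_mul]

include hodd hsymm hrow in
/-- Case A2 : k not in support, with unique preimage i₀. -/
lemma zeroA2 (g : Fin n → Option (Fin n)) (k i₀ : Fin n)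
    (hk : g k = none) (hi₀ : g i₀ = some k) (hki : k ≠ i₀)
    (huniq : ∀ i, i ≠ i₀ → g i ≠ some k) :
    ∑ s : ∀ i, E i, ∏ i, ww C s i (g i) = 0 := by
  refine sum_zero_of_update hodd k _ fun s => ?_
  have hcol : ∑ x : E k, C i₀ k (s i₀) x = 0 := by
    have := hrow k i₀ hki (s i₀)
    rw [← this]
    exact Finset.sum_congr rfl fun x _ => (hsymm i₀ k (s i₀) x (Ne.symm hki)).trans rfl
  have hfac : ∀ x : E k, ∏ i, ww C (update s k x) i (g i)
      = C i₀ k (s i₀) x * ∏ i ∈ univ.erase i₀, ww C s i (g i) := by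
    intro x
    rw [← Finset.mul_prod_erase univ _ (mem_univ i₀), hi₀]
    congr 1
    · rw [ww_some, update_of_ne (Ne.symm hki), update_self]
    · refine Finset.prod_congr rfl fun i hi => ?_
      rcases hgi : g i with _ | j'
      · rfl
      · have hii₀ : i ≠ i₀ := (Finset.mem_erase.mp hi).1
        have hik : i ≠ k := fun h => by rw [h, hk] at hgi; exact nomatch hgi
        have hjk' : j' ≠ k := fun h => huniq i hii₀ (h ▸ hgi)
        rw [ww_some, ww_some, update_of_ne hik, update_of_ne hjk']
  simp only [hfac]
  rw [← Finset.sum_mul, hcol, zero_mul]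

include hodd hsymm hrow in
/-- Case B1 : self-paired nonempty. -/
lemma zeroB1 (g : Fin n → Option (Fin n)) (i₀ j₀ : Fin n)
    (hpair : ∀ i j, g i = some j → g j = some i)
    (h0 : g i₀ = some j₀) (hne : j₀ ≠ i₀) :
    ∑ s : ∀ i, E i, ∏ i, ww C s i (g i) = 0 := by
  refine sum_zero_of_update hodd i₀ _ fun s => ?_
  have h0' : g j₀ = some i₀ := hpair i₀ j₀ h0
  have hfac : ∀ x : E i₀, ∏ i, ww C (update s i₀ x) i (g i)
      = C i₀ j₀ x (s j₀) * ∏ i ∈ (univ.erase i₀).erase j₀, ww C s i (g i) := by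
    intro x
    rw [← Finset.mul_prod_erase univ _ (mem_univ i₀),
      ← Finset.mul_prod_erase (univ.erase i₀) _
        (Finset.mem_erase.mpr ⟨hne, mem_univ j₀⟩), ← mul_assoc, h0, h0']
    congr 1
    · rw [ww_some, ww_some, update_self, update_of_ne hne,
        hsymm j₀ i₀ (s j₀) x hne, zmod2_mul_self]
    · refine Finset.prod_congr rfl fun i hi => ?_
      have hij₀ : i ≠ j₀ := (Finset.mem_erase.mp hi).1
      have hii₀ : i ≠ i₀ := (Finset.mem_erase.mp (Finset.mem_erase.mp hi).2).1
      rcases hgi : g i with _ | j'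
      · rfl
      · have hj'i₀ : j' ≠ i₀ := by
          intro h
          have h2 := hpair i j' hgi
          rw [h, h0] at h2
          exact hij₀ (Option.some.inj h2).symm
        rw [ww_some, ww_some, update_of_ne hii₀, update_of_ne hj'i₀]
  simp only [hfac]
  rw [← Finset.sum_mul, hrow i₀ j₀ (Ne.symm hne) (s j₀), zero_mul]

end

section
variable {α : Type*} [Fintype α] [DecidableEq α]

/-- counting lemma: if every support element has a preimage and every
non-support element with a preimage has two, then `g` is a bijection of
its support. -/
lemma counting (g : α → Option α)
    (hA : ∀ k j, g k = some j → ∃ i, g i = some k)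
    (hB : ∀ k i₀, g k = none → g i₀ = some k → ∃ i, i ≠ i₀ ∧ g i = some k) :
    (∀ i j, g i = some j → (g j).isSome) ∧
    (∀ i i' j, g i = some j → g i' = some j → i = i') ∧
    (∀ j, (g j).isSome → ∃ i, g i = some j) := by
  classical
  set t : Finset α := univ.filter (fun i => (g i).isSome) with ht
  set B : α → Finset α := fun k => univ.filter (fun i => g i = some k) with hB'
  have hfib : t.card = ∑ k, (B k).card := by
    rw [Finset.card_eq_sum_card_fiberwise
      (f := fun i => (g i).getD i) (t := univ) (fun x _ => mem_univ _)]
    refine Finset.sum_congr rfl fun k _ => ?_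
    congr 1
    ext i
    simp only [hB', ht, Finset.mem_filter, Finset.mem_univ, true_and]
    constructor
    · rintro ⟨hs, hv⟩
      obtain ⟨j, hj⟩ := Option.isSome_iff_exists.mp hs
      rw [hj] at hv ⊢
      simp at hv
      rw [hv]
    · intro h
      rw [h]
      simp
  have hmemB : ∀ i k, i ∈ B k ↔ g i = some k := by
    intro i k; simp [hB']
  have hmemt : ∀ k, k ∈ t ↔ (g k).isSome := by
    intro k; simp [ht]
  have hge1 : ∀ k ∈ t, 1 ≤ (B k).card := by
    intro k hk
    obtain ⟨j, hj⟩ := Option.isSome_iff_exists.mp ((hmemt k).mp hk)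
    obtain ⟨i, hi⟩ := hA k j hj
    exact Finset.card_pos.mpr ⟨i, (hmemB i k).mpr hi⟩
  have hsum_le : ∑ k ∈ t, (B k).card ≤ t.card := by
    rw [hfib]
    exact Finset.sum_le_sum_of_subset (Finset.subset_univ t)
  have hsum_eq : ∑ k ∈ t, (B k).card = t.card := by
    refine le_antisymm hsum_le ?_
    calc t.card = ∑ _k ∈ t, 1 := by simp
      _ ≤ _ := Finset.sum_le_sum hge1
  have hoff : ∀ k, k ∉ t → (B k).card = 0 := by
    have hsd : ∑ k ∈ univ \ t, (B k).card = 0 := by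
      have h2 := Finset.sum_sdiff (f := fun k => (B k).card) (Finset.subset_univ t)
      beta_reduce at h2
      omega
    intro k hk
    exact Finset.sum_eq_zero_iff.mp hsd k (Finset.mem_sdiff.mpr ⟨mem_univ k, hk⟩)
  have hone : ∀ k ∈ t, (B k).card = 1 := by
    by_contra hcon
    push_neg at hcon
    obtain ⟨k₀, hk₀, hne1⟩ := hcon
    have h2 : 1 < (B k₀).card := lt_of_le_of_ne (hge1 _ hk₀) (Ne.symm hne1)
    have h3 : ∑ _k ∈ t, 1 < ∑ k ∈ t, (B k).card :=
      Finset.sum_lt_sum hge1 ⟨k₀, hk₀, h2⟩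
    simp only [Finset.sum_const, smul_eq_mul, mul_one] at h3
    omega
  have hP1 : ∀ i j, g i = some j → (g j).isSome := by
    intro i j hij
    by_contra hns
    have hjt : j ∉ t := fun h => hns ((hmemt j).mp h)
    have hc0 : (B j).card = 0 := hoff j hjt
    have hiB : i ∈ B j := (hmemB i j).mpr hij
    rw [Finset.card_eq_zero] at hc0
    rw [hc0] at hiB
    exact absurd hiB (Finset.notMem_empty i)
  refine ⟨hP1, ?_, ?_⟩
  · intro i i' j h h'
    have hjt : j ∈ t := (hmemt j).mpr (hP1 i j h)
    obtain ⟨a, ha⟩ := Finset.card_eq_one.mp (hone j hjt)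
    have h1 : i ∈ B j := (hmemB i j).mpr h
    have h2 : i' ∈ B j := (hmemB i' j).mpr h'
    rw [ha, Finset.mem_singleton] at h1 h2
    rw [h1, h2]
  · intro j hj
    have hjt : j ∈ t := (hmemt j).mpr hj
    have : 0 < (B j).card := hone j hjt ▸ Nat.one_pos
    obtain ⟨i, hi⟩ := Finset.card_pos.mp this
    exact ⟨i, (hmemB i j).mp hi⟩

end

section
variable {α : Type*}

open Classical in
/-- inverse of a partial matching -/
noncomputable def invg (g : α → Option α) : α → Option α :=
  fun k => if h : ∃ i, g i = some k then some h.choose else none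

lemma invg_forward (g : α → Option α) (k i : α) (h : invg g k = some i) :
    g i = some k := by
  rw [invg] at h
  by_cases hex : ∃ i, g i = some k
  · rw [dif_pos hex] at h
    exact (Option.some.inj h) ▸ hex.choose_spec
  · rw [dif_neg hex] at h
    exact nomatch h

lemma invg_none (g : α → Option α) (k : α) (h : ¬ ∃ i, g i = some k) :
    invg g k = none := dif_neg h

lemma invg_backward (g : α → Option α)
    (hP2 : ∀ i i' j, g i = some j → g i' = some j → i = i')
    (k i : α) (h : g i = some k) : invg g k = some i := by
  have hex : ∃ i, g i = some k := ⟨i, h⟩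
  rw [invg, dif_pos hex]
  exact congrArg some (hP2 _ _ _ hex.choose_spec h)

end

lemma parity_main {n : ℕ} (E : Fin n → Type*) [∀ i, Fintype (E i)]
    (hodd : ∀ i, Odd (Fintype.card (E i)))
    (C : ∀ i j : Fin n, E i → E j → ZMod 2)
    (hsymm : ∀ i j x y, i ≠ j → C i j x y = C j i y x)
    (hrow : ∀ i j, i ≠ j → ∀ y : E j, ∑ x : E i, C i j x y = 0) :
    ∑ s : ∀ i, E i, ∏ i, (1 + ∑ j ∈ univ.erase i, C i j (s i) (s j)) = 1 := by
  classical
  set O : ∀ _ : Fin n, Finset (Option (Fin n)) :=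
    fun i => insert none ((univ.erase i).image some) with hO
  -- step 1 : rewrite each factor as a sum over optional partners
  have hstep1 : ∀ (s : ∀ i, E i) (i : Fin n),
      (1 + ∑ j ∈ univ.erase i, C i j (s i) (s j)) = ∑ o ∈ O i, ww C s i o := by
    intro s i
    rw [hO]
    rw [Finset.sum_insert (by simp), Finset.sum_image (by intros; simp_all)]
    simp [ww_none, ww_some]
  set F : (Fin n → Option (Fin n)) → ZMod 2 :=
    fun g => ∑ s : ∀ i, E i, ∏ i, ww C s i (g i) with hF
  have expand : ∑ s : ∀ i, E i, ∏ i, (1 + ∑ j ∈ univ.erase i, C i j (s i) (s j))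
      = ∑ g ∈ Fintype.piFinset O, F g := by
    rw [Finset.sum_congr rfl fun s _ => by
      rw [Finset.prod_congr rfl (fun i _ => hstep1 s i), Finset.prod_univ_sum]]
    exact Finset.sum_comm
  rw [expand]
  -- basic membership facts
  have hselfP : ∀ g ∈ Fintype.piFinset O, ∀ i j, g i = some j → j ≠ i := by
    intro g hg i j hij
    have := (Fintype.mem_piFinset.mp hg) i
    rw [hij, hO] at this
    simp only [Finset.mem_insert, Finset.mem_image, Finset.mem_erase] at this
    rcases this with h | ⟨a, ⟨ha, _⟩, ha'⟩
    · exact nomatch h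
    · exact (Option.some.inj ha') ▸ ha
  set Q : (Fin n → Option (Fin n)) → Prop := fun g =>
    ((∀ i j, g i = some j → (g j).isSome) ∧
     (∀ i i' j, g i = some j → g i' = some j → i = i') ∧
     (∀ j, (g j).isSome → ∃ i, g i = some j)) ∧
    (∃ i j, g i = some j ∧ g j ≠ some i) with hQ
  rw [← Finset.sum_filter_add_sum_filter_not (Fintype.piFinset O) Q F]
  -- part 1 : the "bad bijection" part cancels via the inversion involution
  have h1 : ∑ g ∈ (Fintype.piFinset O).filter Q, F g = 0 := by
    have hmemQ : ∀ g ∈ (Fintype.piFinset O).filter Q,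
        invg g ∈ (Fintype.piFinset O).filter Q := by
      intro g hg
      obtain ⟨hgP, ⟨hP1, hP2, hP3⟩, i₁, j₁, hij₁, hbad₁⟩ := Finset.mem_filter.mp hg
      have hself := hselfP g hgP
      refine Finset.mem_filter.mpr ⟨?_, ⟨?_, ?_, ?_⟩, ?_⟩
      · refine Fintype.mem_piFinset.mpr fun k => ?_
        rcases hc : invg g k with _ | i
        · simp [hO]
        · have hgi : g i = some k := invg_forward g k i hc
          have hik : i ≠ k := fun h => (hself i k hgi) (h ▸ rfl)
          simp only [hO, Finset.mem_insert, Finset.mem_image, Finset.mem_erase]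
          exact Or.inr ⟨i, ⟨hik, mem_univ i⟩, rfl⟩
      · -- P1 for invg
        intro a c hac
        have h1 : g c = some a := invg_forward g a c hac
        obtain ⟨i, hi⟩ := hP3 c (by rw [h1]; rfl)
        rw [invg_backward g hP2 c i hi]
        rfl
      · -- P2 for invg
        intro a a' c h h'
        have h1 := invg_forward g a c h
        have h2 := invg_forward g a' c h'
        rw [h1] at h2
        exact Option.some.inj h2
      · -- P3 for invg
        intro k hk
        obtain ⟨w, hw⟩ := Option.isSome_iff_exists.mp hk
        have hgw : g w = some k := invg_forward g k w hw
        obtain ⟨d, hd⟩ := Option.isSome_iff_exists.mp (hP1 w k hgw)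
        exact ⟨d, invg_backward g hP2 d k hd⟩
      · -- Bad for invg
        refine ⟨j₁, i₁, invg_backward g hP2 j₁ i₁ hij₁, fun h => ?_⟩
        exact hbad₁ (invg_forward g i₁ j₁ h)
    refine Finset.sum_involution (fun g _ => invg g) ?_ ?_ hmemQ ?_
    · -- F g + F (invg g) = 0
      intro g hg
      obtain ⟨hgP, ⟨hP1, hP2, hP3⟩, _⟩ := Finset.mem_filter.mp hg
      have hself := hselfP g hgP
      have hFinv : F (invg g) = F g := by
        rw [hF]
        refine Finset.sum_congr rfl fun s _ => ?_
        have hσinj : Function.Injective (fun i => (g i).getD i) := by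
          intro a b hab
          simp only at hab
          rcases hga : g a with _ | ja <;> rcases hgb : g b with _ | jb
          · rw [hga, hgb] at hab; simpa using hab
          · rw [hga, hgb] at hab
            simp only [Option.getD_none, Option.getD_some] at hab
            exfalso
            have := hP1 b jb hgb
            rw [← hab, hga] at this
            simp at this
          · rw [hga, hgb] at hab
            simp only [Option.getD_none, Option.getD_some] at hab
            exfalso
            have := hP1 a ja hga
            rw [hab, hgb] at this
            simp at this
          · rw [hga, hgb] at hab
            simp only [Option.getD_some] at hab
            exact hP2 a b ja hga (hab ▸ hgb)
        refine (Fintype.prod_bijective _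
          ((Finite.injective_iff_bijective).mp hσinj)
          (fun i => ww C s i (g i)) (fun i => ww C s i (invg g i)) fun i => ?_).symm
        rcases hgi : g i with _ | k
        · have hnone : invg g i = none := by
            refine invg_none g i ?_
            rintro ⟨a, ha⟩
            have := hP1 a i ha
            rw [hgi] at this
            simp at this
          simp only [Option.getD_none]
          show ww C s i none = ww C s i (invg g i)
          rw [hnone]
        · have hik : i ≠ k := fun h => (hself i k hgi) h.symm
          have hki : invg g k = some i := invg_backward g hP2 k i hgi
          simp only [Option.getD_some]
          show ww C s i (some k) = ww C s k (invg g k)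
          rw [hki, ww_some, ww_some]
          exact hsymm i k (s i) (s k) hik
      rw [hFinv]
      exact zmod2_add_self _
    · -- invg g ≠ g when F g ≠ 0
      intro g hg _
      obtain ⟨hgP, ⟨hP1, hP2, hP3⟩, i₁, j₁, hij₁, hbad₁⟩ := Finset.mem_filter.mp hg
      intro heq
      have h5 : invg g j₁ = some i₁ := invg_backward g hP2 j₁ i₁ hij₁
      rw [heq] at h5
      exact hbad₁ h5
    · -- invg (invg g) = g
      intro g hg
      obtain ⟨hgP, ⟨hP1, hP2, hP3⟩, _⟩ := Finset.mem_filter.mp hg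
      funext k
      show invg (invg g) k = g k
      rcases hgk : g k with _ | d
      · refine invg_none (invg g) k ?_
        rintro ⟨a, ha⟩
        have h6 := invg_forward g a k ha
        rw [hgk] at h6
        exact nomatch h6
      · have hP2' : ∀ a a' c, invg g a = some c → invg g a' = some c → a = a' := by
          intro a a' c h h'
          have h1 := invg_forward g a c h
          have h2 := invg_forward g a' c h'
          rw [h1] at h2
          exact Option.some.inj h2
        exact invg_backward (invg g) hP2' k d (invg_backward g hP2 d k hgk)
  -- part 2 : the rest contributes exactly 1 (only the empty choice survives)
  have h2 : ∑ g ∈ (Fintype.piFinset O).filter (fun g => ¬ Q g), F g = 1 := by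
    have hmem0 : (fun _ => none : Fin n → Option (Fin n))
        ∈ (Fintype.piFinset O).filter (fun g => ¬ Q g) := by
      refine Finset.mem_filter.mpr ⟨Fintype.mem_piFinset.mpr fun i => by simp [hO], ?_⟩
      rw [hQ]
      rintro ⟨-, i, j, hij, -⟩
      simp at hij
    rw [Finset.sum_eq_single_of_mem _ hmem0 ?_]
    · -- F (const none) = 1
      rw [hF]
      simp only [ww_none, Finset.prod_const_one, Finset.sum_const, Finset.card_univ,
        nsmul_eq_mul, mul_one]
      refine odd_cast_zmod2 ?_
      rw [Fintype.card_pi]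
      exact Finset.prod_induction _ Odd (fun a b => Odd.mul) odd_one fun i _ => hodd i
    · -- any other g in the non-Q part gives 0
      intro g hg hne
      obtain ⟨hgP, hnQ⟩ := Finset.mem_filter.mp hg
      have hself := hselfP g hgP
      obtain ⟨i₀, j₀, h0⟩ : ∃ i j, g i = some j := by
        by_contra hcon
        push_neg at hcon
        refine hne (funext fun i => ?_)
        rcases hgi : g i with _ | j
        · rfl
        · exact absurd hgi (hcon i j)
      by_cases hA : ∀ k j, g k = some j → ∃ i, g i = some k
      · by_cases hBc : ∀ k i₁, g k = none → g i₁ = some k → ∃ i, i ≠ i₁ ∧ g i = some k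
        · -- then g is a bijection of its support, so ¬Bad, i.e. self-paired
          have hbij := counting g hA hBc
          have hpair : ∀ i j, g i = some j → g j = some i := by
            intro i j hij
            by_contra hnp
            exact hnQ ⟨hbij, i, j, hij, hnp⟩
          exact zeroB1 C hodd hsymm hrow g i₀ j₀ hpair h0 (hself i₀ j₀ h0)
        · push_neg at hBc
          obtain ⟨k, i₁, hk, hi₁, huniq⟩ := hBc
          exact zeroA2 C hodd hsymm hrow g k i₁ hk hi₁ (hself i₁ k hi₁) huniq
      · push_neg at hA
        obtain ⟨k, j, hkj, hpre⟩ := hA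
        exact zeroA1 C hodd hsymm hrow g k j hkj (hself k j hkj) hpre
  rw [h1, h2, zero_add]

lemma even_iff_cast_zmod2 (n : ℕ) : Even n ↔ (n : ZMod 2) = 0 := by
  constructor
  · rintro ⟨t, rfl⟩
    push_cast
    exact zmod2_add_self _
  · intro h
    rw [Nat.even_iff]
    rcases Nat.mod_two_eq_zero_or_one n with h2 | h2
    · exact h2
    · exfalso
      rw [← ZMod.natCast_mod, h2] at h
      simp at h

lemma odd_iff_cast_zmod2 (n : ℕ) : Odd n ↔ (n : ZMod 2) = 1 := by
  constructor
  · exact odd_cast_zmod2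
  · intro h
    rw [Nat.odd_iff]
    rcases Nat.mod_two_eq_zero_or_one n with h2 | h2
    · exfalso
      rw [← ZMod.natCast_mod, h2] at h
      simp at h
    · exact h2

lemma fin_add_one_ne {N : ℕ} (x : Fin (N + 3)) : x + 1 ≠ x := by
  intro h
  have h2 : (1 : Fin (N + 3)) = 0 := add_left_cancel (h.trans (add_zero x).symm)
  have h3 := congrArg Fin.val h2
  rw [Fin.val_one, Fin.val_zero] at h3
  exact one_ne_zero h3

/-- for inscribed closed polygonal lines `P_1, ..., P_n`, each
with an odd number (`2 * m i + 3`) of edges and pairwise disjoint vertex sets,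
the number of ways of choosing one edge from each polygon so that every chosen
chord crosses an even number of the other chosen chords is odd. -/
theorem stmt_3 (n : ℕ) (m : Fin n → ℕ)
    (v : (i : Fin n) → Fin (2 * m i + 3) → ℝ)
    (hrange : ∀ i k, v i k ∈ Set.Ico (0 : ℝ) (2 * Real.pi))
    (hinj : Function.Injective (fun p : Σ i : Fin n, Fin (2 * m i + 3) => v p.1 p.2)) :
    Odd {s : ∀ i : Fin n, Fin (2 * m i + 3) |
        ∀ i, Even {j | j ≠ i ∧
          chordsCross (v i (s i)) (v i (s i + 1)) (v j (s j)) (v j (s j + 1))}.ncard}.ncard := by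
  classical
  set C : ∀ i j : Fin n, Fin (2 * m i + 3) → Fin (2 * m j + 3) → ZMod 2 :=
    fun i j x y =>
      if chordsCross (v i x) (v i (x + 1)) (v j y) (v j (y + 1)) then 1 else 0 with hC
  -- distinctness of vertices
  have hvne : ∀ (i j : Fin n) (x : Fin (2 * m i + 3)) (y : Fin (2 * m j + 3)),
      (⟨i, x⟩ : Σ i, Fin (2 * m i + 3)) ≠ ⟨j, y⟩ → v i x ≠ v j y :=
    fun i j x y hne heq => hne (hinj heq)
  have hvne2 : ∀ (i : Fin n) (x y : Fin (2 * m i + 3)), x ≠ y → v i x ≠ v i y := by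
    intro i x y hxy
    refine hvne i i x y fun h => hxy ?_
    simpa using h
  have hsucc : ∀ (i : Fin n) (x : Fin (2 * m i + 3)), v i (x + 1) ≠ v i x :=
    fun i x => hvne2 i _ _ (fin_add_one_ne x)
  have hcross_iff : ∀ (i j : Fin n), i ≠ j →
      ∀ (x : Fin (2 * m i + 3)) (y : Fin (2 * m j + 3)),
      (chordsCross (v i x) (v i (x + 1)) (v j y) (v j (y + 1)) ↔
       chordsCross (v j y) (v j (y + 1)) (v i x) (v i (x + 1))) := by
    intro i j hij x y
    have hd : ∀ (x' : Fin (2 * m i + 3)) (y' : Fin (2 * m j + 3)), v i x' ≠ v j y' :=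
      fun x' y' => hvne i j x' y' (by simp [hij])
    exact chordsCross_comm (hsucc i x).symm (hd x y) (hd x (y + 1))
      (hd (x + 1) y) (hd (x + 1) (y + 1)) (hsucc j y).symm
  have hsymm : ∀ (i j : Fin n) (x : Fin (2 * m i + 3)) (y : Fin (2 * m j + 3)),
      i ≠ j → C i j x y = C j i y x := by
    intro i j x y hij
    rw [hC]
    exact if_congr (hcross_iff i j hij x y) rfl rfl
  have hrow : ∀ i j : Fin n, i ≠ j → ∀ y : Fin (2 * m j + 3),
      ∑ x : Fin (2 * m i + 3), C i j x y = 0 := by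
    intro i j hij y
    have key : ∀ x : Fin (2 * m i + 3), C i j x y =
        (if circBtw (v j y) (v i x) (v j (y + 1)) then (1 : ZMod 2) else 0)
        + (if circBtw (v j y) (v i (x + 1)) (v j (y + 1)) then (1 : ZMod 2) else 0) := by
      intro x
      rw [hC]
      simp only
      rw [if_congr (hcross_iff i j hij x y) rfl rfl]
      unfold chordsCross
      by_cases h1 : circBtw (v j y) (v i x) (v j (y + 1)) <;>
        by_cases h2 : circBtw (v j y) (v i (x + 1)) (v j (y + 1)) <;>
        simp [Xor', h1, h2] <;> decide
    calc ∑ x : Fin (2 * m i + 3), C i j x y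
        = (∑ x : Fin (2 * m i + 3),
            if circBtw (v j y) (v i x) (v j (y + 1)) then (1 : ZMod 2) else 0)
          + ∑ x : Fin (2 * m i + 3),
            (if circBtw (v j y) (v i (x + 1)) (v j (y + 1)) then (1 : ZMod 2) else 0) := by
          rw [← Finset.sum_add_distrib]
          exact Finset.sum_congr rfl fun x _ => key x
      _ = 0 := by
          have he : (∑ x : Fin (2 * m i + 3),
              (if circBtw (v j y) (v i (x + 1)) (v j (y + 1)) then (1 : ZMod 2) else 0))
              = ∑ x : Fin (2 * m i + 3),
                if circBtw (v j y) (v i x) (v j (y + 1)) then (1 : ZMod 2) else 0 :=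
            Fintype.sum_equiv (Equiv.addRight (1 : Fin (2 * m i + 3)))
              (fun x => if circBtw (v j y) (v i (x + 1)) (v j (y + 1)) then (1 : ZMod 2) else 0)
              (fun x => if circBtw (v j y) (v i x) (v j (y + 1)) then (1 : ZMod 2) else 0)
              fun x => rfl
          rw [he, zmod2_add_self]
  have hodd : ∀ i, Odd (Fintype.card (Fin (2 * m i + 3))) := by
    intro i
    rw [Fintype.card_fin]
    exact ⟨m i + 1, by ring⟩
  have key := parity_main (fun i => Fin (2 * m i + 3)) hodd C hsymm hrow
  -- now convert the goal
  have hpred : ∀ s : (∀ i, Fin (2 * m i + 3)), ∀ i : Fin n,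
      (Even {j | j ≠ i ∧ chordsCross (v i (s i)) (v i (s i + 1))
          (v j (s j)) (v j (s j + 1))}.ncard
        ↔ (∑ j ∈ Finset.univ.erase i, C i j (s i) (s j)) = 0) := by
    intro s i
    have hset : {j | j ≠ i ∧ chordsCross (v i (s i)) (v i (s i + 1))
        (v j (s j)) (v j (s j + 1))}.ncard
        = (univ.filter (fun j => j ≠ i ∧ chordsCross (v i (s i)) (v i (s i + 1))
            (v j (s j)) (v j (s j + 1)))).card := by
      rw [← Set.ncard_coe_finset]
      congr 1
      ext j
      simp
    rw [hset, even_iff_cast_zmod2, Finset.card_filter]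
    push_cast
    have hsum : (∑ j : Fin n, if (j ≠ i ∧ chordsCross (v i (s i)) (v i (s i + 1))
          (v j (s j)) (v j (s j + 1))) then (1 : ZMod 2) else 0)
        = ∑ j ∈ Finset.univ.erase i, C i j (s i) (s j) := by
      rw [← Finset.sum_filter, ← Finset.sum_filter]
      congr 1
      ext j
      simp only [Finset.mem_filter, Finset.mem_univ, true_and, Finset.mem_erase, hC]
      tauto
    rw [hsum]
  have hncard : {s : ∀ i : Fin n, Fin (2 * m i + 3) |
        ∀ i, Even {j | j ≠ i ∧
          chordsCross (v i (s i)) (v i (s i + 1)) (v j (s j)) (v j (s j + 1))}.ncard}.ncard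
      = (univ.filter (fun s : ∀ i : Fin n, Fin (2 * m i + 3) =>
          ∀ i, Even {j | j ≠ i ∧
            chordsCross (v i (s i)) (v i (s i + 1)) (v j (s j)) (v j (s j + 1))}.ncard)).card := by
    rw [← Set.ncard_coe_finset]
    congr 1
    ext s
    simp
  have hcast : ((univ.filter (fun s : ∀ i : Fin n, Fin (2 * m i + 3) =>
          ∀ i, Even {j | j ≠ i ∧
            chordsCross (v i (s i)) (v i (s i + 1)) (v j (s j)) (v j (s j + 1))}.ncard)).card
        : ZMod 2)
      = ∑ s : ∀ i : Fin n, Fin (2 * m i + 3),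
          ∏ i, (1 + ∑ j ∈ Finset.univ.erase i, C i j (s i) (s j)) := by
    rw [Finset.card_filter]
    push_cast
    refine Finset.sum_congr rfl fun s _ => ?_
    by_cases hp : ∀ i, Even {j | j ≠ i ∧
        chordsCross (v i (s i)) (v i (s i + 1)) (v j (s j)) (v j (s j + 1))}.ncard
    · have hs : ∀ i, (∑ j ∈ Finset.univ.erase i, C i j (s i) (s j)) = 0 :=
        fun i => (hpred s i).mp (hp i)
      rw [if_pos hp]
      symm
      calc ∏ i, (1 + ∑ j ∈ Finset.univ.erase i, C i j (s i) (s j))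
          = ∏ _i : Fin n, (1 : ZMod 2) :=
            Finset.prod_congr rfl fun i _ => by rw [hs i, add_zero]
        _ = 1 := Finset.prod_const_one
    · have hs : ¬ ∀ i, (∑ j ∈ Finset.univ.erase i, C i j (s i) (s j)) = 0 :=
        fun h => hp fun i => (hpred s i).mpr (h i)
      rw [if_neg hp]
      push_neg at hs
      obtain ⟨i, hXi⟩ := hs
      have h1 : (∑ j ∈ Finset.univ.erase i, C i j (s i) (s j)) = 1 := by
        have hz : ∀ z : ZMod 2, z ≠ 0 → z = 1 := by decide
        exact hz _ hXi
      symm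
      refine Finset.prod_eq_zero (Finset.mem_univ i) ?_
      rw [h1]
      decide
  rw [hncard, odd_iff_cast_zmod2, hcast]
  exact key
end

section
/- Let G be a cycle-plus-triangles graph on 3n vertices and fix a proper 3-coloring with colors c_1, c_2, c_3. For {i,j,k} = {1,2,3}, let N_k denote the number of edges of the Hamiltonian cycle whose endpoints are colored c_i and c_j. Then N_1 = N_2 = N_3 = n. -/
/-- in any proper 3-coloring of a cycle-plus-triangles graph on
`3n` vertices, for each color `k` the number of Hamiltonian-cycle edges whose
endpoints avoid color `k` (i.e. are colored with the other two colors) is `n`. -/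
theorem stmt_11 (n : ℕ) (hn : 1 ≤ n) (t : Fin n × Fin 3 ≃ Fin (3 * n)) :
    haveI : NeZero (3 * n) := ⟨by omega⟩
    let G : SimpleGraph (Fin (3 * n)) :=
      SimpleGraph.fromRel (fun u v => v = u + 1 ∨ (t.symm u).1 = (t.symm v).1)
    (∀ u : Fin (3 * n), (t.symm u).1 ≠ (t.symm (u + 1)).1) →
    ∀ c : Fin (3 * n) → Fin 3, (∀ u v, G.Adj u v → c u ≠ c v) →
      ∀ k : Fin 3, {i : Fin (3 * n) | c i ≠ k ∧ c (i + 1) ≠ k}.ncard = n := by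
  haveI : NeZero (3 * n) := ⟨by omega⟩
  intro G hne c hc k
  have hone : (1 : Fin (3 * n)) ≠ 0 := by
    have h1 : ((1 : Fin (3 * n)) : ℕ) = 1 % (3 * n) := rfl
    have h2 : (1 : ℕ) % (3 * n) = 1 := Nat.mod_eq_of_lt (by omega)
    intro h
    rw [Fin.ext_iff, h1, h2] at h
    simp at h
  -- cycle edges are properly colored
  have hcyc : ∀ i : Fin (3 * n), c i ≠ c (i + 1) := by
    intro i
    refine hc i (i + 1) ⟨?_, Or.inl (Or.inl rfl)⟩
    intro h
    exact hone (left_eq_add.mp h)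
  -- triangles are rainbow
  have hbij : ∀ j : Fin n, Function.Bijective (fun a : Fin 3 => c (t (j, a))) := by
    intro j
    rw [← Finite.injective_iff_bijective]
    intro a b hab
    by_contra hne'
    have hadj : G.Adj (t (j, a)) (t (j, b)) := by
      refine ⟨?_, Or.inl (Or.inr ?_)⟩
      · intro h
        exact hne' (by simpa [Prod.ext_iff] using t.injective h)
      · simp
    exact hc _ _ hadj hab
  -- the color class of k has exactly n elements
  have hA : (Finset.univ.filter fun i : Fin (3 * n) => c i = k).card = n := by
    have he : (Finset.univ.filter fun i : Fin (3 * n) => c i = k).card =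
        (Finset.univ.filter fun p : Fin n × Fin 3 => c (t p) = k).card := by
      refine Finset.card_equiv t.symm fun i => ?_
      simp
    rw [he, Finset.card_filter, Fintype.sum_prod_type]
    have hrow : ∀ j : Fin n,
        (∑ a : Fin 3, if c (t (j, a)) = k then (1 : ℕ) else 0) = 1 := by
      intro j
      rw [Fintype.sum_bijective _ (hbij j)
        (fun a => if c (t (j, a)) = k then (1 : ℕ) else 0)
        (fun b => if b = k then (1 : ℕ) else 0) (fun a => rfl)]
      simp
    simp [hrow]
  -- shifted color class also has n elements
  have hB : (Finset.univ.filter fun i : Fin (3 * n) => c (i + 1) = k).card = n := by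
    have := Finset.card_equiv (s := Finset.univ.filter fun i : Fin (3 * n) => c (i + 1) = k)
      (t := Finset.univ.filter fun i : Fin (3 * n) => c i = k)
      (Equiv.addRight (1 : Fin (3 * n))) (fun i => by simp)
    rw [this, hA]
  -- convert ncard to Finset card
  have hset : {i : Fin (3 * n) | c i ≠ k ∧ c (i + 1) ≠ k} =
      ↑(Finset.univ.filter fun i : Fin (3 * n) => c i ≠ k ∧ c (i + 1) ≠ k) := by
    ext i; simp
  rw [hset, Set.ncard_coe_finset]
  have hdisj : Disjoint (Finset.univ.filter fun i : Fin (3 * n) => c i = k)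
      (Finset.univ.filter fun i : Fin (3 * n) => c (i + 1) = k) := by
    rw [Finset.disjoint_filter]
    intro i _ h1 h2
    exact hcyc i (h1.trans h2.symm)
  have hcompl : (Finset.univ.filter fun i : Fin (3 * n) => c i ≠ k ∧ c (i + 1) ≠ k) =
      Finset.univ \ ((Finset.univ.filter fun i : Fin (3 * n) => c i = k) ∪
        (Finset.univ.filter fun i : Fin (3 * n) => c (i + 1) = k)) := by
    ext i
    simp [not_or, and_comm]
  rw [hcompl, Finset.card_sdiff_of_subset (Finset.subset_univ _),
    Finset.card_union_of_disjoint hdisj, hA, hB]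
  simp only [Finset.card_univ, Fintype.card_fin]
  omega
end

section
/- Consider a proper 2-coloring (black/white) of 2n points on a circle that are the endpoint sets of n pairwise non-adjacent chords, one black and one white endpoint per chord. The black and white points alternate around the circle if and only if each chord crosses an even number of the other chords. -/
def cB {m : ℕ} (a b c : Fin m) : Prop :=
  if a < c then a < b ∧ b < c else a < b ∨ b < c

instance {m : ℕ} (a b c : Fin m) : Decidable (cB a b c) := by
  unfold cB; infer_instance

lemma cB_self_left {m : ℕ} (a b : Fin m) : ¬ cB a a b := by
  unfold cB
  split_ifs with h
  · rintro ⟨u, -⟩; exact lt_irrefl _ u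
  · rintro (u | u) <;> [exact lt_irrefl _ u; exact h u]

lemma cB_self_right {m : ℕ} (a b : Fin m) : ¬ cB a b b := by
  unfold cB
  split_ifs with h
  · rintro ⟨-, u⟩; exact lt_irrefl _ u
  · rintro (u | u) <;> [exact h u; exact lt_irrefl _ u]

lemma emptyArc_iff {m : ℕ} (a b : Fin m) (hab : a ≠ b) :
    (∀ x : Fin m, x ≠ a → x ≠ b → ¬ cB a x b) ↔
      (b.val = a.val + 1 ∨ (a.val + 1 = m ∧ b.val = 0)) := by
  have hab' : a.val ≠ b.val := fun h => hab (Fin.ext h)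
  constructor
  · intro H
    by_cases hc : a < b
    · left
      by_contra hb1
      rw [Fin.lt_def] at hc
      have h1 : a.val + 1 < b.val := by omega
      have hx : a.val + 1 < m := lt_trans h1 b.isLt
      refine H ⟨a.val + 1, hx⟩ (by simp [Fin.ext_iff]) (by simp [Fin.ext_iff]; omega) ?_
      unfold cB
      rw [if_pos (by rw [Fin.lt_def]; omega)]
      simp [Fin.lt_def]; omega
    · right
      rw [Fin.lt_def] at hc
      have hba : b.val < a.val := by omega
      constructor
      · by_contra ha1
        have hx : a.val + 1 < m := by have := a.isLt; omega
        refine H ⟨a.val + 1, hx⟩ (by simp [Fin.ext_iff]) (by simp [Fin.ext_iff]; omega) ?_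
        unfold cB
        rw [if_neg (by rw [Fin.lt_def]; omega)]
        left; rw [Fin.lt_def]; simp
      · by_contra hb0
        have hx : b.val - 1 < m := by have := b.isLt; omega
        refine H ⟨b.val - 1, hx⟩ (by simp [Fin.ext_iff]; omega) (by simp [Fin.ext_iff]; omega) ?_
        unfold cB
        rw [if_neg (by rw [Fin.lt_def]; omega)]
        right; rw [Fin.lt_def]; simp; omega
  · intro H x hxa hxb
    have hxa' : x.val ≠ a.val := fun h => hxa (Fin.ext h)
    have hxb' : x.val ≠ b.val := fun h => hxb (Fin.ext h)
    have hx := x.isLt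
    have hb := b.isLt
    rcases H with h1 | ⟨h2, h3⟩
    · unfold cB
      rw [if_pos (by rw [Fin.lt_def]; omega)]
      rintro ⟨u, v⟩
      rw [Fin.lt_def] at u v; omega
    · unfold cB
      rw [if_neg (by rw [Fin.lt_def]; omega)]
      rintro (u | u) <;> rw [Fin.lt_def] at u <;> omega

lemma succ_parity {m : ℕ} (hm : Even m) {a b : Fin m}
    (h : b.val = a.val + 1 ∨ (a.val + 1 = m ∧ b.val = 0)) :
    (Even a.val ↔ ¬ Even b.val) := by
  obtain ⟨t, ht⟩ := hm
  rw [Nat.even_iff, Nat.even_iff]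
  rcases h with h | ⟨h1, h2⟩ <;> omega

lemma g_parity {m : ℕ} (hm : 0 < m) (g : Fin m → Bool)
    (hg : ∀ a b : Fin m, (b.val = a.val + 1 ∨ (a.val + 1 = m ∧ b.val = 0)) → g b = !g a) :
    ∀ v (h : v < m), g ⟨v, h⟩ = if Even v then g ⟨0, hm⟩ else !g ⟨0, hm⟩ := by
  intro v
  induction v with
  | zero => intro h; simp
  | succ k ih =>
    intro h
    have hk : k < m := Nat.lt_of_succ_lt h
    rw [hg ⟨k, hk⟩ ⟨k + 1, h⟩ (Or.inl rfl), ih hk]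
    by_cases he : Even k
    · rw [if_pos he, if_neg (by simp [Nat.even_add_one, he])]
    · rw [if_neg he, if_pos (by simp [Nat.even_add_one, he]), Bool.not_not]

lemma odd_two_card {p : Fin 2 → Prop} [DecidablePred p] :
    Odd (Finset.univ.filter p).card ↔ Xor' (p 0) (p 1) := by
  rw [Finset.card_filter, Fin.sum_univ_two]
  by_cases h0 : p 0 <;> by_cases h1 : p 1 <;>
    simp [h0, h1, Xor', Nat.odd_iff]

lemma cross_parity {n : ℕ} (ρ : Fin n × Fin 2 → Fin (2 * n))
    (hρ : Function.Bijective ρ) (i : Fin n) :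
    (Even {k | k ≠ i ∧ Xor' (cB (ρ (i, 0)) (ρ (k, 0)) (ρ (i, 1)))
        (cB (ρ (i, 0)) (ρ (k, 1)) (ρ (i, 1)))}.ncard
      ↔ ¬ (Even (ρ (i, 0)).val ↔ Even (ρ (i, 1)).val)) := by
  classical
  set a := ρ (i, 0) with ha
  set b := ρ (i, 1) with hb
  have hab : a ≠ b := by
    intro h
    have := hρ.injective h
    simp at this
  have hab' : a.val ≠ b.val := fun h => hab (Fin.ext h)
  set T : Finset (Fin (2 * n)) := Finset.univ.filter (fun v => cB a v b) with hTdef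
  -- T.card as a sum over chords
  have hT : T.card = ∑ k : Fin n,
      ((Finset.univ.filter (fun j : Fin 2 => cB a (ρ (k, j)) b)).card) := by
    rw [hTdef, Finset.card_filter]
    have hsum := Fintype.sum_bijective ρ hρ
      (fun p => if cB a (ρ p) b then 1 else 0)
      (fun v => if cB a v b then 1 else 0) (fun p => rfl)
    rw [← hsum, Fintype.sum_prod_type]
    exact Finset.sum_congr rfl (fun k _ => (Finset.card_filter _ _).symm)
  -- T.card explicitly
  have hTcard : T.card = if a < b then b.val - a.val - 1 else (2 * n - 1 - a.val) + b.val := by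
    by_cases hc : a < b
    · rw [if_pos hc, ← Fin.card_Ioo]
      congr 1
      ext v
      simp only [hTdef, Finset.mem_filter, Finset.mem_univ, true_and, Finset.mem_Ioo]
      unfold cB
      rw [if_pos hc]
    · rw [if_neg hc, ← Fin.card_Ioi, ← Fin.card_Iio (b := b)]
      have hdisj : Disjoint (Finset.Ioi a) (Finset.Iio b) := by
        rw [Finset.disjoint_left]
        intro v hv hv'
        rw [Finset.mem_Ioi] at hv
        rw [Finset.mem_Iio] at hv'
        exact lt_irrefl v (lt_trans (lt_of_lt_of_le hv' (le_of_not_gt hc)) hv)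
      rw [← Finset.card_union_of_disjoint hdisj]
      congr 1
      ext v
      simp only [hTdef, Finset.mem_filter, Finset.mem_univ, true_and, Finset.mem_union,
        Finset.mem_Ioi, Finset.mem_Iio]
      unfold cB
      rw [if_neg hc]
  -- the crossing set as a Finset
  have hset : {k | k ≠ i ∧ Xor' (cB a (ρ (k, 0)) b) (cB a (ρ (k, 1)) b)}.ncard
      = (Finset.univ.filter (fun k : Fin n =>
          Odd ((Finset.univ.filter (fun j : Fin 2 => cB a (ρ (k, j)) b)).card))).card := by
    rw [show {k | k ≠ i ∧ Xor' (cB a (ρ (k, 0)) b) (cB a (ρ (k, 1)) b)}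
        = ↑(Finset.univ.filter (fun k : Fin n =>
          Odd ((Finset.univ.filter (fun j : Fin 2 => cB a (ρ (k, j)) b)).card))) from ?_,
      Set.ncard_coe_finset]
    ext k
    simp only [Set.mem_setOf_eq, Finset.coe_filter, Finset.mem_univ, true_and]
    rw [odd_two_card]
    by_cases hk : k = i
    · subst hk
      rw [← ha, ← hb]
      simp [Xor', cB_self_left, cB_self_right]
    · simp [hk]
  rw [hset, ← Finset.even_sum_iff_even_card_odd, ← hT, hTcard]
  have h1 := a.isLt
  have h2 := b.isLt
  by_cases hc : a < b
  · rw [if_pos hc]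
    rw [Fin.lt_def] at hc
    rw [Nat.even_iff, Nat.even_iff, Nat.even_iff]
    omega
  · rw [if_neg hc]
    rw [Fin.lt_def] at hc
    rw [Nat.even_iff, Nat.even_iff, Nat.even_iff]
    omega

def altF {n : ℕ} (ρ : Fin n × Fin 2 → Fin (2 * n)) (ε : Fin n → Fin 2) : Prop :=
  ∀ (i k : Fin n) (j l : Fin 2), (i, j) ≠ (k, l) →
    (∀ (a : Fin n) (b : Fin 2), (a, b) ≠ (i, j) → (a, b) ≠ (k, l) →
      ¬ cB (ρ (i, j)) (ρ (a, b)) (ρ (k, l))) →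
    ((j = ε i) ↔ ¬ (l = ε k))

def parF {n : ℕ} (ρ : Fin n × Fin 2 → Fin (2 * n)) : Prop :=
  ∀ i : Fin n, ¬ (Even (ρ (i, 0)).val ↔ Even (ρ (i, 1)).val)

noncomputable def epsF {n : ℕ} (ρ : Fin n × Fin 2 → Fin (2 * n)) (c : Bool) (i : Fin n) : Fin 2 :=
  if Even (ρ (i, 0)).val ↔ c = true then 0 else 1

lemma eps_char {n : ℕ} (ρ : Fin n × Fin 2 → Fin (2 * n)) (hp : parF ρ) (c : Bool)
    (i : Fin n) (j : Fin 2) :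
    (j = epsF ρ c i) ↔ (Even (ρ (i, j)).val ↔ c = true) := by
  have hpi := hp i
  have hj : j = 0 ∨ j = 1 := by omega
  unfold epsF
  rcases hj with rfl | rfl
  · split_ifs with h
    · simp [h]
    · simp [h]
  · split_ifs with h
    · simp only [iff_false_intro (by decide : ¬ ((1 : Fin 2) = 0))]
      tauto
    · simp only [iff_true_intro (rfl : (1 : Fin 2) = 1), true_iff]
      tauto

lemma eps_ne {n : ℕ} (hn : 1 ≤ n) (ρ : Fin n × Fin 2 → Fin (2 * n)) :
    epsF ρ true ≠ epsF ρ false := by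
  intro h
  have := congrFun h ⟨0, hn⟩
  unfold epsF at this
  by_cases he : Even (ρ (⟨0, hn⟩, 0)).val <;> simp [he] at this

lemma K1 {n : ℕ} (hn : 1 ≤ n) (ρ : Fin n × Fin 2 → Fin (2 * n))
    (hρ : Function.Bijective ρ) (hp : parF ρ) (c : Bool) : altF ρ (epsF ρ c) := by
  intro i k j l hne hemp
  have hab : ρ (i, j) ≠ ρ (k, l) := fun h => hne (hρ.injective h)
  have hsucc : (ρ (k, l)).val = (ρ (i, j)).val + 1 ∨
      ((ρ (i, j)).val + 1 = 2 * n ∧ (ρ (k, l)).val = 0) := by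
    rw [← emptyArc_iff _ _ hab]
    intro v hva hvb
    obtain ⟨p, rfl⟩ := hρ.surjective v
    have h1 : (p.1, p.2) ≠ (i, j) := by
      intro h; apply hva; rw [← h]
    have h2 : (p.1, p.2) ≠ (k, l) := by
      intro h; apply hvb; rw [← h]
    have := hemp p.1 p.2 h1 h2
    rwa [show ((p.1, p.2) : Fin n × Fin 2) = p from rfl] at this
  have hpar := succ_parity ⟨n, by ring⟩ hsucc
  rw [eps_char ρ hp c i j, eps_char ρ hp c k l]
  tauto

lemma K2 {n : ℕ} (hn : 1 ≤ n) (ρ : Fin n × Fin 2 → Fin (2 * n))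
    (hρ : Function.Bijective ρ) (ε : Fin n → Fin 2) (halt : altF ρ ε) :
    parF ρ ∧ (ε = epsF ρ true ∨ ε = epsF ρ false) := by
  classical
  have hm : 0 < 2 * n := by omega
  set ψ := Equiv.ofBijective ρ hρ with hψ
  set g : Fin (2 * n) → Bool := fun v => decide ((ψ.symm v).2 = ε (ψ.symm v).1) with hg
  have hgρ : ∀ p, g (ρ p) = decide (p.2 = ε p.1) := by
    intro p
    show decide ((ψ.symm (ρ p)).2 = ε (ψ.symm (ρ p)).1) = _
    have hps : ψ.symm (ρ p) = p := by
      apply ψ.injective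
      rw [ψ.apply_symm_apply]
      rfl
    rw [hps]
  have hflip : ∀ a b : Fin (2 * n),
      (b.val = a.val + 1 ∨ (a.val + 1 = 2 * n ∧ b.val = 0)) → g b = !g a := by
    intro a b hsucc
    have hab : a ≠ b := by
      intro h
      subst h
      rcases hsucc with h | ⟨h1, h2⟩ <;> omega
    set p := ψ.symm a with hp
    set q := ψ.symm b with hq
    have hρp : ρ p = a := ψ.apply_symm_apply a
    have hρq : ρ q = b := ψ.apply_symm_apply b
    have hpq : (p.1, p.2) ≠ (q.1, q.2) := by
      intro h
      apply hab
      rw [← hρp, ← hρq]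
      exact congrArg ρ (by rw [show ((p.1, p.2) : Fin n × Fin 2) = p from rfl,
        show ((q.1, q.2) : Fin n × Fin 2) = q from rfl] at h; rw [h])
    have hemp : ∀ (a' : Fin n) (b' : Fin 2), (a', b') ≠ (p.1, p.2) → (a', b') ≠ (q.1, q.2) →
        ¬ cB (ρ (p.1, p.2)) (ρ (a', b')) (ρ (q.1, q.2)) := by
      intro a' b' h1 h2
      rw [show ((p.1, p.2) : Fin n × Fin 2) = p from rfl,
        show ((q.1, q.2) : Fin n × Fin 2) = q from rfl, hρp, hρq]
      refine (emptyArc_iff a b hab).2 hsucc (ρ (a', b')) ?_ ?_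
      · intro h; apply h1
        rw [← hρp] at h
        have := hρ.injective h
        rw [this]
      · intro h; apply h2
        rw [← hρq] at h
        have := hρ.injective h
        rw [this]
    have hiff := halt p.1 q.1 p.2 q.2 hpq hemp
    have hA : g a = decide (p.2 = ε p.1) := by rw [← hρp]; exact hgρ p
    have hB : g b = decide (q.2 = ε q.1) := by rw [← hρq]; exact hgρ q
    rw [hA, hB]
    by_cases h1 : (p.2 = ε p.1) <;> by_cases h2 : (q.2 = ε q.1)
    · exact absurd h2 (hiff.1 h1)
    · rw [decide_eq_false h2, decide_eq_true h1]; rfl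
    · rw [decide_eq_true h2, decide_eq_false h1]; rfl
    · exact absurd (hiff.2 h2) h1
  have gpar := g_parity hm g hflip
  have hgform : ∀ p : Fin n × Fin 2,
      g (ρ p) = if Even (ρ p).val then g ⟨0, hm⟩ else !g ⟨0, hm⟩ := by
    intro p
    have := gpar (ρ p).val (ρ p).isLt
    rwa [Fin.eta] at this
  -- parity within each chord
  have hp : parF ρ := by
    intro i hi
    have h0 : g (ρ (i, 0)) = decide ((0 : Fin 2) = ε i) := hgρ (i, 0)
    have h1 : g (ρ (i, 1)) = decide ((1 : Fin 2) = ε i) := hgρ (i, 1)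
    have hne : g (ρ (i, 0)) = !g (ρ (i, 1)) := by
      have : ε i = 0 ∨ ε i = 1 := by omega
      rcases this with h | h <;> rw [h0, h1, h] <;> decide
    rw [hgform (i, 0), hgform (i, 1)] at hne
    by_cases he : Even (ρ (i, 0)).val
    · rw [if_pos he, if_pos (hi.1 he)] at hne
      exact (Bool.eq_not_self _).1 hne
    · rw [if_neg he, if_neg (fun h => he (hi.2 h))] at hne
      rw [Bool.not_not] at hne
      exact (Bool.not_eq_self _).1 hne
  refine ⟨hp, ?_⟩
  have hdet : ∀ (c : Bool), g ⟨0, hm⟩ = c → ε = epsF ρ c := by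
    intro c hc
    funext i
    have key : ∀ j : Fin 2, (j = ε i) ↔ (Even (ρ (i, j)).val ↔ c = true) := by
      intro j
      have h1 : g (ρ (i, j)) = decide (j = ε i) := hgρ (i, j)
      rw [hgform (i, j), hc] at h1
      by_cases he : Even (ρ (i, j)).val
      · rw [if_pos he] at h1
        have hc2 : (c = true) ↔ (j = ε i) := by
          constructor
          · intro hct; subst hct; exact of_decide_eq_true h1.symm
          · intro hj
            cases c
            · exact h1.trans (decide_eq_true hj)
            · rfl
        simp only [iff_true_intro he, true_iff]
        exact hc2.symm
      · rw [if_neg he] at h1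
        have hc2 : (c = true) ↔ ¬ (j = ε i) := by
          constructor
          · intro hct
            subst hct
            rw [Bool.not_true] at h1
            exact of_decide_eq_false h1.symm
          · intro hj
            cases c
            · rw [Bool.not_false] at h1
              exact absurd (of_decide_eq_true h1.symm) hj
            · rfl
        simp only [iff_false_intro he, false_iff]
        tauto
    have h2 := (key (epsF ρ c i)).2 ((eps_char ρ hp c i (epsF ρ c i)).1 rfl)
    exact h2.symm
  rcases Bool.eq_false_or_eq_true (g ⟨0, hm⟩) with h | h
  · left; exact hdet true h
  · right; exact hdet false h

lemma cB_transfer {α : Type*} (f : α → ℝ) {m : ℕ} (r : α → Fin m)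
    (h : ∀ x y, f x < f y ↔ r x < r y) (p x q : α) :
    circBtw (f p) (f x) (f q) ↔ cB (r p) (r x) (r q) := by
  unfold circBtw cB
  by_cases hc : f p < f q
  · rw [if_pos hc, if_pos ((h _ _).1 hc)]
    exact and_congr (h _ _) (h _ _)
  · rw [if_neg hc, if_neg (fun hh => hc ((h _ _).2 hh))]
    exact or_congr (h _ _) (h _ _)

/-- given `n` pairwise non-adjacent chords of a circle (chord `i`
has endpoint angles `e i 0`, `e i 1`, all `2n` endpoints distinct), a choice
`ε` of one black endpoint per chord (the other being white) is *alternating*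
if any two cyclically consecutive endpoints get different colors.  Then an
alternating choice exists iff every chord crosses an even number of the other
chords, and in that case there are exactly two alternating choices. -/
theorem stmt_19 (n : ℕ) (hn : 1 ≤ n) (e : Fin n → Fin 2 → ℝ)
    (hrange : ∀ i j, e i j ∈ Set.Ico (0 : ℝ) (2 * Real.pi))
    (hinj : Function.Injective (fun p : Fin n × Fin 2 => e p.1 p.2)) :
    let alt : (Fin n → Fin 2) → Prop := fun ε =>
      ∀ (i k : Fin n) (j l : Fin 2), (i, j) ≠ (k, l) →
        (∀ (a : Fin n) (b : Fin 2), (a, b) ≠ (i, j) → (a, b) ≠ (k, l) →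
          ¬ circBtw (e i j) (e a b) (e k l)) →
        ((j = ε i) ↔ ¬ (l = ε k))
    let evenCross : Prop :=
      ∀ i, Even {k | k ≠ i ∧ chordsCross (e i 0) (e i 1) (e k 0) (e k 1)}.ncard
    ((∃ ε, alt ε) ↔ evenCross) ∧ (evenCross → {ε | alt ε}.ncard = 2) := by
  classical
  intro alt evenCross
  -- construct the rank bijection
  set pts : Fin n × Fin 2 → ℝ := fun p => e p.1 p.2 with hpts
  have hcard : (Finset.univ.image pts).card = 2 * n := by
    rw [Finset.card_image_of_injective _ hinj, Finset.card_univ, Fintype.card_prod,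
      Fintype.card_fin, Fintype.card_fin]
    ring
  set φ := Finset.orderIsoOfFin _ hcard with hφ
  set ρ : Fin n × Fin 2 → Fin (2 * n) :=
    fun p => φ.symm ⟨pts p, Finset.mem_image_of_mem pts (Finset.mem_univ p)⟩ with hρdef
  have hmono : ∀ x y, pts x < pts y ↔ ρ x < ρ y := by
    intro x y
    rw [hρdef]
    simp only
    rw [OrderIso.lt_iff_lt φ.symm, Subtype.mk_lt_mk]
  have hρinj : Function.Injective ρ := by
    intro x y h
    apply hinj
    have h2 := φ.symm.injective h
    exact congrArg Subtype.val h2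
  have hρ : Function.Bijective ρ := by
    rw [Fintype.bijective_iff_injective_and_card]
    refine ⟨hρinj, ?_⟩
    rw [Fintype.card_prod, Fintype.card_fin, Fintype.card_fin, Fintype.card_fin]
    ring
  have hcb : ∀ (i a k : Fin n) (j b l : Fin 2),
      circBtw (e i j) (e a b) (e k l) ↔ cB (ρ (i, j)) (ρ (a, b)) (ρ (k, l)) :=
    fun i a k j b l => cB_transfer pts ρ hmono (i, j) (a, b) (k, l)
  have haltiff : ∀ ε, alt ε ↔ altF ρ ε := by
    intro ε
    constructor
    · intro h i k j l hne hemp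
      exact h i k j l hne (fun a b h1 h2 hcB => hemp a b h1 h2 ((hcb i a k j b l).1 hcB))
    · intro h i k j l hne hemp
      exact h i k j l hne (fun a b h1 h2 hcB => hemp a b h1 h2 ((hcb i a k j b l).2 hcB))
  have hev : evenCross ↔ parF ρ := by
    have : ∀ i : Fin n, {k | k ≠ i ∧ chordsCross (e i 0) (e i 1) (e k 0) (e k 1)}
        = {k | k ≠ i ∧ Xor' (cB (ρ (i, 0)) (ρ (k, 0)) (ρ (i, 1)))
            (cB (ρ (i, 0)) (ρ (k, 1)) (ρ (i, 1)))} := by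
      intro i
      ext k
      simp only [Set.mem_setOf_eq]
      refine and_congr Iff.rfl ?_
      unfold chordsCross
      unfold Xor'
      rw [hcb i k i 0 0 1, hcb i k i 0 1 1]
    show (∀ i, Even {k | k ≠ i ∧ chordsCross (e i 0) (e i 1) (e k 0) (e k 1)}.ncard) ↔ parF ρ
    apply forall_congr'
    intro i
    rw [this i]
    exact cross_parity ρ hρ i
  constructor
  · constructor
    · rintro ⟨ε, hε⟩
      exact hev.2 (K2 hn ρ hρ ε ((haltiff ε).1 hε)).1
    · intro hE
      exact ⟨epsF ρ true, (haltiff _).2 (K1 hn ρ hρ (hev.1 hE) true)⟩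
  · intro hE
    have hp := hev.1 hE
    have hpair : {ε | alt ε} = {epsF ρ true, epsF ρ false} := by
      ext ε
      simp only [Set.mem_setOf_eq, Set.mem_insert_iff, Set.mem_singleton_iff]
      constructor
      · intro h
        exact (K2 hn ρ hρ ε ((haltiff ε).1 h)).2
      · rintro (rfl | rfl) <;> exact (haltiff _).2 (K1 hn ρ hρ hp _)
    rw [hpair, Set.ncard_pair (eps_ne hn ρ)]
end
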